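/- arXiv:1807.09084 — 3 statements merged into one kernel-verified Lean document; each statement's English description precedes it below -/
import Mathlib

section
/- Let d ≥ 1 and let 𝖠 ⊆ M_d(ℝ) be compact and nonempty with a multicone (K_1,…,K_m) and transverse-defining vector w, and let Ω := {z ∈ ℂ^d : z ∈ ∪_{j=1}^m int(K_j^ℂ) and ⟨z,w⟩ = 1}. Then for every z ∈ Ω and every A ∈ 𝒮(𝖠), the real part of ⟨Az,w⟩ is nonzero: Re(⟨Az,w⟩) ≠ 0. -/
open scoped BigOperators Pointwise

noncomputable section

/-- The Euclidean norm of a finitely-indexed vector (real or complex entries). -/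
def enorm {ι : Type*} [Fintype ι] {E : Type*} [Norm E] (u : ι → E) : ℝ :=
  Real.sqrt (∑ i, ‖u i‖ ^ 2)

/-- The operator norm of a real matrix induced by the Euclidean norm. -/
def opNorm {ι : Type*} [Fintype ι] (A : Matrix ι ι ℝ) : ℝ :=
  sSup ((fun u : ι → ℝ => _root_.enorm (A.mulVec u)) '' {u : ι → ℝ | _root_.enorm u = 1})

/-- A multicone for a set of matrices (Definition 1.2). -/
def IsMulticone {ι : Type*} [Fintype ι] (S : Set (Matrix ι ι ℝ)) {m : ℕ}
    (K : Fin m → Set (ι → ℝ)) (w : ι → ℝ) : Prop :=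
  (∀ j, IsClosed (K j)) ∧ (∀ j, Convex ℝ (K j)) ∧ (∀ j, (interior (K j)).Nonempty) ∧
  (∀ j, ∀ c : ℝ, 0 ≤ c → ∀ u ∈ K j, c • u ∈ K j) ∧
  (∑ i, w i ^ 2 = 1) ∧
  (∀ u ∈ ⋃ j, K j, u ≠ 0 → 0 < ∑ i, u i * w i) ∧
  (∀ A ∈ S, ∀ j, ∃ ℓ, ∀ u ∈ K j, u ≠ 0 →
    A.mulVec u ∈ interior (K ℓ) ∨ -A.mulVec u ∈ interior (K ℓ)) ∧
  (∀ j₁ j₂, j₁ ≠ j₂ → K j₁ ∩ K j₂ = {0})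

/-- The set of matrices is multipositive if it admits a multicone. -/
def IsMultipositive {ι : Type*} [Fintype ι] (S : Set (Matrix ι ι ℝ)) : Prop :=
  ∃ (m : ℕ) (_ : 0 < m) (K : Fin m → Set (ι → ℝ)) (w : ι → ℝ), IsMulticone S K w

/-- The semigroup generated by a set of matrices. -/
def semigroupOf {ι : Type*} [Fintype ι] [DecidableEq ι] (S : Set (Matrix ι ι ℝ)) :
    Set (Matrix ι ι ℝ) :=
  {B | ∃ l : List (Matrix ι ι ℝ), l ≠ [] ∧ (∀ M ∈ l, M ∈ S) ∧ B = l.prod}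

/-- The complexification of a set in ℝ^ι. -/
def complexify {ι : Type*} (K : Set (ι → ℝ)) : Set (ι → ℂ) :=
  {z | ∃ (c : ℂ) (u v : ι → ℝ), u ∈ K ∧ v ∈ K ∧
    z = fun i => c * (((u i : ℂ) + (v i : ℂ)) + Complex.I * ((u i : ℂ) - (v i : ℂ)))}

/-- The action of a real matrix on complex vectors. -/
def mulVecC {ι : Type*} [Fintype ι] (A : Matrix ι ι ℝ) (z : ι → ℂ) : ι → ℂ :=
  (A.map (fun x : ℝ => (x : ℂ))).mulVec z

/-- An ℝ-cone: closed, convex, nonempty interior, positively homogeneous, proper. -/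
def IsRCone {ι : Type*} [Fintype ι] (K : Set (ι → ℝ)) : Prop :=
  IsClosed K ∧ Convex ℝ K ∧ (interior K).Nonempty ∧
  (∀ c : ℝ, 0 < c → c • K = K) ∧ K ∩ (-K) = {0}

end

section StmtFiveHelpers

variable {d : ℕ}

private lemma stmt5_sum_lin (w : Fin d → ℝ) (c₁ c₂ : ℂ) (x y : Fin d → ℝ) :
    ∑ i, (c₁ * (x i : ℂ) + c₂ * (y i : ℂ)) * (w i : ℂ)
      = c₁ * ((∑ i, x i * w i : ℝ) : ℂ) + c₂ * ((∑ i, y i * w i : ℝ) : ℂ) := by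
  push_cast
  rw [Finset.mul_sum, Finset.mul_sum, ← Finset.sum_add_distrib]
  exact Finset.sum_congr rfl fun i _ => by ring

private lemma stmt5_mulVecC_lin (A : Matrix (Fin d) (Fin d) ℝ) (c₁ c₂ : ℂ) (x y : Fin d → ℝ) :
    mulVecC A (fun i => c₁ * (x i : ℂ) + c₂ * (y i : ℂ))
      = fun i => c₁ * ((A.mulVec x i : ℝ) : ℂ) + c₂ * ((A.mulVec y i : ℝ) : ℂ) := by
  funext i
  simp only [mulVecC, Matrix.mulVec, dotProduct, Matrix.map_apply]
  push_cast
  rw [Finset.mul_sum, Finset.mul_sum, ← Finset.sum_add_distrib]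
  exact Finset.sum_congr rfl fun k _ => by ring

end StmtFiveHelpers

/-- Theorem 3.1(iii): for every z ∈ Ω and A in the generated semigroup, Re⟨Az,w⟩ ≠ 0. -/
theorem stmt5 {d m : ℕ} (hd : 1 ≤ d) (hm : 0 < m)
    (S : Set (Matrix (Fin d) (Fin d) ℝ)) (hSne : S.Nonempty) (hScpt : IsCompact S)
    (K : Fin m → Set (Fin d → ℝ)) (w : Fin d → ℝ) (hK : IsMulticone S K w)
    (Ω : Set (Fin d → ℂ))
    (hΩ : Ω = {z : Fin d → ℂ | (∃ j, z ∈ interior (complexify (K j))) ∧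
      ∑ i, z i * (w i : ℂ) = 1}) :
    ∀ z ∈ Ω, ∀ A ∈ semigroupOf S, (∑ i, mulVecC A z i * (w i : ℂ)).re ≠ 0 := by
  obtain ⟨hcl, hconv, hint, hscale, hw, hpos, hmap, hdisj⟩ := hK
  have hwne : w ≠ 0 := by
    intro h
    rw [h] at hw
    simp at hw
  -- 0 is not in the interior of any cone
  have h0int : ∀ ℓ, (0 : Fin d → ℝ) ∉ interior (K ℓ) := by
    intro ℓ h0
    have hmem : K ℓ ∈ nhds (0 : Fin d → ℝ) := mem_interior_iff_mem_nhds.mp h0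
    obtain ⟨ε, hε, hball⟩ := Metric.mem_nhds_iff.mp hmem
    set c : ℝ := -(ε / (2 * (‖w‖ + 1))) with hc
    have hwpos : (0:ℝ) < ‖w‖ + 1 := by positivity
    have hcneg : c < 0 := by
      have : 0 < ε / (2 * (‖w‖ + 1)) := by positivity
      rw [hc]; linarith
    have hx : c • w ∈ Metric.ball (0 : Fin d → ℝ) ε := by
      rw [Metric.mem_ball, dist_zero_right, norm_smul]
      have h1 : ‖c‖ = ε / (2 * (‖w‖ + 1)) := by
        rw [hc, norm_neg, Real.norm_eq_abs, abs_of_pos (by positivity)]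
      rw [h1]
      have hwlt : ‖w‖ < ‖w‖ + 1 := by linarith
      calc ε / (2 * (‖w‖ + 1)) * ‖w‖ < ε / (2 * (‖w‖ + 1)) * (‖w‖ + 1) :=
            mul_lt_mul_of_pos_left hwlt (by positivity)
        _ = ε / 2 := by field_simp
        _ < ε := by linarith
    have hxK : c • w ∈ K ℓ := hball hx
    have hxne : c • w ≠ 0 := by
      simp only [ne_eq, smul_eq_zero, not_or]
      exact ⟨ne_of_lt hcneg, hwne⟩
    have hp := hpos (c • w) (Set.mem_iUnion.mpr ⟨ℓ, hxK⟩) hxne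
    have hsum : ∑ i, (c • w) i * w i = c := by
      simp only [Pi.smul_apply, smul_eq_mul, mul_assoc, ← Finset.mul_sum]
      rw [show ∑ i, w i * w i = ∑ i, w i ^ 2 from Finset.sum_congr rfl fun i _ => by ring, hw,
        mul_one]
    rw [hsum] at hp
    linarith
  -- inner product positive on interiors
  have hipint : ∀ ℓ (x : Fin d → ℝ), x ∈ interior (K ℓ) → 0 < ∑ i, x i * w i := by
    intro ℓ x hx
    have hxne : x ≠ 0 := fun h => h0int ℓ (h ▸ hx)
    exact hpos x (Set.mem_iUnion.mpr ⟨ℓ, interior_subset hx⟩) hxne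
  -- inner product nonzero on ± interiors
  have hipne : ∀ ℓ (x : Fin d → ℝ), (x ∈ interior (K ℓ) ∨ -x ∈ interior (K ℓ)) →
      ∑ i, x i * w i ≠ 0 := by
    intro ℓ x h
    rcases h with h | h
    · exact ne_of_gt (hipint ℓ x h)
    · have hp := hipint ℓ (-x) h
      have hneg : ∑ i, (-x) i * w i = -∑ i, x i * w i := by
        simp [neg_mul]
      rw [hneg] at hp
      intro h0; rw [h0] at hp; simp at hp
  -- cones are closed under addition
  have hsum2 : ∀ j, ∀ u ∈ K j, ∀ v ∈ K j, u + v ∈ K j := by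
    intro j u hu v hv
    have hmid : (1/2 : ℝ) • u + (1/2 : ℝ) • v ∈ K j :=
      hconv j hu hv (by norm_num) (by norm_num) (by norm_num)
    have h2 := hscale j 2 (by norm_num) _ hmid
    have heq : (2:ℝ) • ((1/2 : ℝ) • u + (1/2 : ℝ) • v) = u + v := by
      rw [smul_add, smul_smul, smul_smul]; norm_num
    rwa [heq] at h2
  -- members of the semigroup map each cone into a ± interior
  have hsg : ∀ l : List (Matrix (Fin d) (Fin d) ℝ), l ≠ [] → (∀ M ∈ l, M ∈ S) →
      ∀ j, ∃ ℓ, ∀ u ∈ K j, u ≠ 0 →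
        l.prod.mulVec u ∈ interior (K ℓ) ∨ -l.prod.mulVec u ∈ interior (K ℓ) := by
    intro l
    induction l with
    | nil => intro h; exact absurd rfl h
    | cons M t ih =>
      intro _ hmem j
      rcases eq_or_ne t [] with rfl | htne
      · simpa using hmap M (hmem M (by simp)) j
      · obtain ⟨ℓ, hℓ⟩ := ih htne (fun N hN => hmem N (by simp [hN])) j
        obtain ⟨ℓ', hℓ'⟩ := hmap M (hmem M (by simp)) ℓ
        refine ⟨ℓ', fun u hu hune => ?_⟩
        have hprod : (M :: t).prod.mulVec u = M.mulVec (t.prod.mulVec u) := by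
          rw [List.prod_cons, ← Matrix.mulVec_mulVec]
        rcases hℓ u hu hune with hx | hx
        · have hxne : t.prod.mulVec u ≠ 0 := fun h => h0int ℓ (h ▸ hx)
          have hres := hℓ' _ (interior_subset hx) hxne
          rw [hprod]
          exact hres
        · have hxne : -t.prod.mulVec u ≠ 0 := fun h => h0int ℓ (h ▸ hx)
          have hres := hℓ' _ (interior_subset hx) hxne
          rw [Matrix.mulVec_neg] at hres
          rw [hprod]
          rcases hres with hres | hres
          · right; exact hres
          · left; rwa [neg_neg] at hres
  intro z hz A hA
  rw [hΩ] at hz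
  obtain ⟨⟨j, hzint⟩, hz1⟩ := hz
  obtain ⟨c, u, v, hu, hv, hzeq⟩ := interior_subset hzint
  set c₁ : ℂ := c * (1 + Complex.I) with hc₁
  set c₂ : ℂ := c * (1 - Complex.I) with hc₂
  have hzi : z = fun i => c₁ * (u i : ℂ) + c₂ * (v i : ℂ) := by
    rw [hzeq]; funext i; rw [hc₁, hc₂]; ring
  obtain ⟨ℓ, hAmap⟩ := (by
    obtain ⟨l, hlne, hlS, rfl⟩ := hA
    exact hsg l hlne hlS j :
    ∃ ℓ, ∀ x ∈ K j, x ≠ 0 → A.mulVec x ∈ interior (K ℓ) ∨ -A.mulVec x ∈ interior (K ℓ))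
  -- abbreviations
  have hz1' : c₁ * ((∑ i, u i * w i : ℝ) : ℂ) + c₂ * ((∑ i, v i * w i : ℝ) : ℂ) = 1 := by
    rw [← stmt5_sum_lin w c₁ c₂ u v, ← hz1]
    exact Finset.sum_congr rfl fun i _ => by rw [hzi]
  have hgoal : ∑ i, mulVecC A z i * (w i : ℂ)
      = c₁ * ((∑ i, A.mulVec u i * w i : ℝ) : ℂ) + c₂ * ((∑ i, A.mulVec v i * w i : ℝ) : ℂ) := by
    rw [hzi, stmt5_mulVecC_lin, ← stmt5_sum_lin w c₁ c₂ (A.mulVec u) (A.mulVec v)]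
  set α := ∑ i, u i * w i with hα
  set β := ∑ i, v i * w i with hβ
  set a := ∑ i, A.mulVec u i * w i with haa
  set b := ∑ i, A.mulVec v i * w i with hbb
  -- the key real inequality
  have hkey : α * a + β * b ≠ 0 := by
    rcases eq_or_ne u 0 with rfl | hune
    · have ha0 : a = 0 := by simp [haa, Matrix.mulVec_zero]
      have hα0 : α = 0 := by simp [hα]
      have hvne : v ≠ 0 := by
        rintro rfl
        have hβ0 : β = 0 := by simp [hβ]
        rw [hα0, hβ0] at hz1'
        simp at hz1'
      have hβpos : 0 < β := hpos v (Set.mem_iUnion.mpr ⟨j, hv⟩) hvne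
      have hbne : b ≠ 0 := hipne ℓ _ (hAmap v hv hvne)
      rw [ha0, hα0]
      simpa using mul_ne_zero (ne_of_gt hβpos) hbne
    rcases eq_or_ne v 0 with rfl | hvne
    · have hb0 : b = 0 := by simp [hbb, Matrix.mulVec_zero]
      have hβ0 : β = 0 := by simp [hβ]
      have hαpos : 0 < α := hpos u (Set.mem_iUnion.mpr ⟨j, hu⟩) hune
      have hane : a ≠ 0 := hipne ℓ _ (hAmap u hu hune)
      rw [hb0, hβ0]
      simpa using mul_ne_zero (ne_of_gt hαpos) hane
    · have hαpos : 0 < α := hpos u (Set.mem_iUnion.mpr ⟨j, hu⟩) hune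
      have hβpos : 0 < β := hpos v (Set.mem_iUnion.mpr ⟨j, hv⟩) hvne
      have hane : a ≠ 0 := hipne ℓ _ (hAmap u hu hune)
      have hbne : b ≠ 0 := hipne ℓ _ (hAmap v hv hvne)
      have habpos : 0 < a * b := by
        rcases lt_trichotomy (a * b) 0 with hlt | heq | hgt
        · exfalso
          set t : ℝ := -a / b with ht
          have htpos : 0 < t := by
            rcases mul_neg_iff.mp hlt with ⟨ha1, hb1⟩ | ⟨ha1, hb1⟩
            · exact div_pos_of_neg_of_neg (by linarith) hb1
            · exact div_pos (by linarith) hb1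
          have hxK : u + t • v ∈ K j := hsum2 j u hu _ (hscale j t (le_of_lt htpos) v hv)
          have hipx : ∑ i, (u + t • v) i * w i = α + t * β := by
            simp only [Pi.add_apply, Pi.smul_apply, smul_eq_mul, add_mul]
            rw [Finset.sum_add_distrib, hα, hβ, Finset.mul_sum]
            congr 1
            exact Finset.sum_congr rfl fun i _ => by ring
          have hxne : u + t • v ≠ 0 := by
            intro h
            have hp : (0:ℝ) < α + t * β := by positivity
            rw [h] at hipx
            simp only [Pi.zero_apply, zero_mul, Finset.sum_const_zero] at hipx
            linarith
          have hipAx : ∑ i, A.mulVec (u + t • v) i * w i = a + t * b := by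
            rw [Matrix.mulVec_add, Matrix.mulVec_smul]
            simp only [Pi.add_apply, Pi.smul_apply, smul_eq_mul, add_mul]
            rw [Finset.sum_add_distrib, haa, hbb, Finset.mul_sum]
            congr 1
            exact Finset.sum_congr rfl fun i _ => by ring
          have hne := hipne ℓ _ (hAmap _ hxK hxne)
          rw [hipAx] at hne
          apply hne
          rw [ht]
          field_simp
          ring
        · exact absurd heq (mul_ne_zero hane hbne)
        · exact hgt
      rcases mul_pos_iff.mp habpos with ⟨ha1, hb1⟩ | ⟨ha1, hb1⟩
      · exact ne_of_gt (add_pos (mul_pos hαpos ha1) (mul_pos hβpos hb1))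
      · exact ne_of_lt (by nlinarith)
  -- finish by complex algebra
  have hc2re : c₂.re = c₁.im := by
    rw [hc₁, hc₂]
    simp [Complex.mul_re, Complex.mul_im]
    try ring
  have hc2im : c₂.im = -c₁.re := by
    rw [hc₁, hc₂]
    simp [Complex.mul_re, Complex.mul_im]
    try ring
  set r := c₁.re with hr
  set s := c₁.im with hs
  have h1 : r * α + s * β = 1 := by
    have h := congrArg Complex.re hz1'
    simp only [Complex.add_re, Complex.mul_re, Complex.ofReal_re, Complex.ofReal_im, mul_zero, zero_add,
      sub_zero, Complex.one_re, hc2re] at h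
    exact h
  have h2 : s * α + -r * β = 0 := by
    have h := congrArg Complex.im hz1'
    simp only [Complex.add_im, Complex.mul_im, Complex.ofReal_re, Complex.ofReal_im, mul_zero, zero_add,
      add_zero, Complex.one_im, hc2im] at h
    exact h
  rw [hgoal]
  intro h0
  simp only [Complex.add_re, Complex.mul_re, Complex.ofReal_re, Complex.ofReal_im, mul_zero, zero_add,
    sub_zero, hc2re] at h0
  -- h0 : r * a + s * b = 0
  have hr0 : r * (α * a + β * b) = 0 := by linear_combination α * h0 - b * h2
  have hs0 : s * (α * a + β * b) = 0 := by linear_combination β * h0 + a * h2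
  have hr1 : r = 0 := by
    rcases mul_eq_zero.mp hr0 with h | h
    · exact h
    · exact absurd h hkey
  have hs1 : s = 0 := by
    rcases mul_eq_zero.mp hs0 with h | h
    · exact h
    · exact absurd h hkey
  rw [hr1, hs1] at h1
  simp at h1
end

section
/- Let d ≥ 1 and let 𝖠 ⊆ M_d(ℝ) be compact and nonempty with a multicone (K_1,…,K_m) and transverse-defining vector w, and let Ω := {z ∈ ℂ^d : z ∈ ∪_{j=1}^m int(K_j^ℂ) and ⟨z,w⟩ = 1}. Then Ω is a nonempty, bounded subset of the complex hyperplane {z ∈ ℂ^d : ⟨z,w⟩ = 1} which is open in the subspace topology of that hyperplane, and for every A ∈ 𝒮(𝖠) and z ∈ Ω one has ⟨Az,w⟩ ≠ 0 and Āz := ⟨Az,w⟩^{-1} Az ∈ Ω; in particular the map Ā : Ω → Ω is well-defined for every A ∈ 𝒮(𝖠). -/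
open scoped BigOperators Pointwise

lemma cplx_interior_mem {d : ℕ} {K : Set (Fin d → ℝ)} {p q : Fin d → ℝ}
    (hp : p ∈ interior K) (hq : q ∈ interior K) :
    (fun i => (((p i : ℂ) + (q i : ℂ)) + Complex.I * ((p i : ℂ) - (q i : ℂ)))) ∈
      interior (complexify K) := by
  apply mem_interior.mpr
  refine ⟨(fun z : Fin d → ℂ =>
      ((fun i => ((z i).re + (z i).im)/2, fun i => ((z i).re - (z i).im)/2)
        : (Fin d → ℝ) × (Fin d → ℝ))) ⁻¹' (interior K ×ˢ interior K), ?_, ?_, ?_⟩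
  · intro z hz
    simp only [Set.mem_preimage, Set.mem_prod] at hz
    refine ⟨1, _, _, interior_subset hz.1, interior_subset hz.2, funext fun i => ?_⟩
    rw [Complex.ext_iff]
    push_cast
    constructor <;> simp <;> ring
  · apply IsOpen.preimage ?_ (isOpen_interior.prod isOpen_interior)
    fun_prop
  · simp only [Set.mem_preimage, Set.mem_prod]
    constructor
    · convert hp using 1
      funext i
      simp
    · convert hq using 1
      funext i
      simp

lemma complexify_smul_subset {d : ℕ} (K : Set (Fin d → ℝ)) (c : ℂ) :
    c • complexify K ⊆ complexify K := by
  rintro _ ⟨z, ⟨c', u, v, hu, hv, rfl⟩, rfl⟩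
  exact ⟨c * c', u, v, hu, hv, funext fun i => by simp [mul_assoc]⟩

lemma smul_mem_interior_complexify {d : ℕ} {K : Set (Fin d → ℝ)} {c : ℂ} (hc : c ≠ 0)
    {z : Fin d → ℂ} (hz : z ∈ interior (complexify K)) :
    c • z ∈ interior (complexify K) := by
  have hEq : c • complexify K = complexify K := by
    apply Set.Subset.antisymm (complexify_smul_subset K c)
    intro x hx
    have : c⁻¹ • x ∈ complexify K :=
      complexify_smul_subset K c⁻¹ (Set.smul_mem_smul_set hx)
    have := Set.smul_mem_smul_set (a := c) this
    rwa [smul_inv_smul₀ hc] at this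
  have : c • z ∈ c • interior (complexify K) := Set.smul_mem_smul_set hz
  rwa [← interior_smul₀ hc, hEq] at this

lemma dot_formula {d : ℕ} (c : ℂ) (u v w : Fin d → ℝ) :
    ∑ i, (c * (((u i : ℂ) + (v i : ℂ)) + Complex.I * ((u i : ℂ) - (v i : ℂ)))) * (w i : ℂ)
      = c * ((((∑ i, u i * w i : ℝ) : ℂ) + ((∑ i, v i * w i : ℝ) : ℂ))
          + Complex.I * (((∑ i, u i * w i : ℝ) : ℂ) - ((∑ i, v i * w i : ℝ) : ℂ))) := by
  have h1 : ∀ i : Fin d, (c * (((u i : ℂ) + (v i : ℂ)) + Complex.I * ((u i : ℂ) - (v i : ℂ)))) * (w i : ℂ)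
      = c * (1 + Complex.I) * ((u i : ℂ) * (w i : ℂ)) + c * (1 - Complex.I) * ((v i : ℂ) * (w i : ℂ)) :=
    fun i => by ring
  rw [Finset.sum_congr rfl (fun i _ => h1 i), Finset.sum_add_distrib, ← Finset.mul_sum,
    ← Finset.mul_sum]
  push_cast
  ring

lemma abs_sq_eq (x y : ℝ) :
    ‖(x : ℂ) + Complex.I * (y : ℂ)‖ ^ 2 = x ^ 2 + y ^ 2 := by
  rw [Complex.sq_norm, Complex.normSq_apply]
  simp
  ring

lemma mulVecC_decomp {d : ℕ} (A : Matrix (Fin d) (Fin d) ℝ) (c : ℂ) (u v : Fin d → ℝ) :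
    (Matrix.mulVec (A.map (fun x : ℝ => (x : ℂ)))
        (fun i => c * (((u i : ℂ) + (v i : ℂ)) + Complex.I * ((u i : ℂ) - (v i : ℂ)))))
      = fun i => c * (((A.mulVec u i : ℂ) + (A.mulVec v i : ℂ))
          + Complex.I * ((A.mulVec u i : ℂ) - (A.mulVec v i : ℂ))) := by
  funext i
  simp only [Matrix.mulVec, dotProduct, Matrix.map_apply]
  have h1 : ∀ k : Fin d, ((A i k : ℂ)) * (c * (((u k : ℂ) + (v k : ℂ)) + Complex.I * ((u k : ℂ) - (v k : ℂ))))
      = c * (1 + Complex.I) * ((A i k : ℂ) * (u k : ℂ)) + c * (1 - Complex.I) * ((A i k : ℂ) * (v k : ℂ)) :=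
    fun k => by ring
  rw [Finset.sum_congr rfl (fun k _ => h1 k), Finset.sum_add_distrib, ← Finset.mul_sum,
    ← Finset.mul_sum]
  push_cast
  ring

lemma zero_not_mem_interior {d m : ℕ} {K : Fin m → Set (Fin d → ℝ)} {w : Fin d → ℝ}
    (hw1 : ∑ i, w i ^ 2 = 1)
    (htr : ∀ u ∈ ⋃ j, K j, u ≠ 0 → 0 < ∑ i, u i * w i) (j : Fin m) :
    (0 : Fin d → ℝ) ∉ interior (K j) := by
  intro h0
  have hw0 : w ≠ 0 := by
    intro h; rw [h] at hw1; simp at hw1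
  obtain ⟨ε, hε, hball⟩ := Metric.isOpen_iff.mp isOpen_interior 0 h0
  set t : Fin d → ℝ := -(ε / (2 * ‖w‖)) • w with ht
  have hwn : 0 < ‖w‖ := norm_pos_iff.mpr hw0
  have htne : t ≠ 0 := by
    simp only [ht, ne_eq, smul_eq_zero, neg_eq_zero]
    push_neg
    constructor
    · positivity
    · exact hw0
  have htmem : t ∈ K j := by
    apply interior_subset
    apply hball
    simp only [Metric.mem_ball, dist_zero_right, ht, norm_smul, norm_neg]
    rw [Real.norm_eq_abs, abs_of_pos (by positivity : (0:ℝ) < ε / (2 * ‖w‖))]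
    rw [div_mul_eq_mul_div]
    rw [div_lt_iff₀ (by positivity)]
    nlinarith
  have := htr t (Set.mem_iUnion.mpr ⟨j, htmem⟩) htne
  have hcalc : ∑ i, t i * w i = -(ε / (2 * ‖w‖)) * ∑ i, w i ^ 2 := by
    rw [Finset.mul_sum]
    apply Finset.sum_congr rfl
    intro i _
    simp [ht]
    ring
  rw [hcalc, hw1, mul_one] at this
  have : (0:ℝ) < ε / (2 * ‖w‖) := by positivity
  linarith

lemma delta_exists {d m : ℕ} {K : Fin m → Set (Fin d → ℝ)} {w : Fin d → ℝ} (hm : 0 < m)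
    (hcl : ∀ j, IsClosed (K j))
    (hcone : ∀ j, ∀ c : ℝ, 0 ≤ c → ∀ u ∈ K j, c • u ∈ K j)
    (htr : ∀ u ∈ ⋃ j, K j, u ≠ 0 → 0 < ∑ i, u i * w i) :
    ∃ δ : ℝ, 0 < δ ∧ ∀ j, ∀ u ∈ K j, δ * ‖u‖ ≤ ∑ i, u i * w i := by
  have key : ∀ j : Fin m, ∃ δ : ℝ, 0 < δ ∧ ∀ u ∈ K j, δ * ‖u‖ ≤ ∑ i, u i * w i := by
    intro j
    set C : Set (Fin d → ℝ) := K j ∩ Metric.sphere 0 1 with hC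
    have hCcpt : IsCompact C := by
      apply Metric.isCompact_of_isClosed_isBounded
      · exact (hcl j).inter Metric.isClosed_sphere
      · exact (Metric.isBounded_closedBall (x := (0 : Fin d → ℝ)) (r := 1)).subset
          (Set.inter_subset_right.trans Metric.sphere_subset_closedBall)
    have hfc : Continuous (fun u : Fin d → ℝ => ∑ i, u i * w i) := by fun_prop
    by_cases hCne : C.Nonempty
    · obtain ⟨x₀, hx₀C, hx₀min'⟩ := hCcpt.exists_isMinOn hCne hfc.continuousOn
      have hx₀min : ∀ y ∈ C, (∑ i, x₀ i * w i) ≤ ∑ i, y i * w i := fun y hy => hx₀min' hy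
      have hx₀ne : x₀ ≠ 0 := by
        intro h
        have := hx₀C.2
        rw [h] at this
        simp at this
      have hδpos : 0 < ∑ i, x₀ i * w i :=
        htr x₀ (Set.mem_iUnion.mpr ⟨j, hx₀C.1⟩) hx₀ne
      refine ⟨∑ i, x₀ i * w i, hδpos, ?_⟩
      intro u hu
      rcases eq_or_ne u 0 with rfl | hune
      · simp
      · have hun : 0 < ‖u‖ := norm_pos_iff.mpr hune
        have hmem : ‖u‖⁻¹ • u ∈ C := by
          constructor
          · exact hcone j ‖u‖⁻¹ (by positivity) u hu
          · simp [norm_smul, abs_of_pos (by positivity : (0:ℝ) < ‖u‖⁻¹),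
              inv_mul_cancel₀ hun.ne']
        have := hx₀min _ hmem
        have hcalc : ∑ i, (‖u‖⁻¹ • u) i * w i = ‖u‖⁻¹ * ∑ i, u i * w i := by
          rw [Finset.mul_sum]
          exact Finset.sum_congr rfl fun i _ => by simp; ring
        rw [hcalc] at this
        calc (∑ i, x₀ i * w i) * ‖u‖ ≤ (‖u‖⁻¹ * ∑ i, u i * w i) * ‖u‖ := by
              apply mul_le_mul_of_nonneg_right this hun.le
          _ = ∑ i, u i * w i := by field_simp
    · refine ⟨1, one_pos, ?_⟩
      intro u hu
      rcases eq_or_ne u 0 with rfl | hune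
      · simp
      · exfalso
        apply hCne
        have hun : 0 < ‖u‖ := norm_pos_iff.mpr hune
        refine ⟨‖u‖⁻¹ • u, hcone j ‖u‖⁻¹ (by positivity) u hu, ?_⟩
        simp [norm_smul, abs_of_pos (by positivity : (0:ℝ) < ‖u‖⁻¹),
          inv_mul_cancel₀ hun.ne']
  choose δf hδpos hδ using key
  have hne : (Finset.univ : Finset (Fin m)).Nonempty := by
    have : Nonempty (Fin m) := ⟨⟨0, hm⟩⟩
    exact Finset.univ_nonempty
  refine ⟨Finset.univ.inf' hne δf, ?_, ?_⟩
  · obtain ⟨j, _, hj⟩ := Finset.exists_mem_eq_inf' hne δf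
    rw [hj]; exact hδpos j
  · intro j u hu
    calc (Finset.univ.inf' hne δf) * ‖u‖ ≤ δf j * ‖u‖ :=
          mul_le_mul_of_nonneg_right (Finset.inf'_le δf (Finset.mem_univ j)) (norm_nonneg u)
      _ ≤ _ := hδ j u hu

lemma re_pos_ne_zero {a b : ℝ} (ha : 0 < a + b) :
    (((a:ℂ) + (b:ℂ)) + Complex.I * ((a:ℂ) - (b:ℂ))) ≠ 0 := by
  intro h
  have := congrArg Complex.re h
  simp at this
  linarith

lemma good_point {d m : ℕ} {K : Fin m → Set (Fin d → ℝ)} {w : Fin d → ℝ}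
    (hw1 : ∑ i, w i ^ 2 = 1)
    (htr : ∀ u ∈ ⋃ j, K j, u ≠ 0 → 0 < ∑ i, u i * w i)
    {ℓ : Fin m} {p q : Fin d → ℝ} {c : ℂ}
    (hp : p ∈ interior (K ℓ)) (hq : q ∈ interior (K ℓ)) (hc : c ≠ 0) :
    (fun i => c * (((p i : ℂ) + (q i : ℂ)) + Complex.I * ((p i : ℂ) - (q i : ℂ))))
      ∈ interior (complexify (K ℓ)) ∧
    (∑ i, (c * (((p i : ℂ) + (q i : ℂ)) + Complex.I * ((p i : ℂ) - (q i : ℂ)))) * (w i : ℂ)) ≠ 0 := by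
  have hpne : p ≠ 0 := fun h => zero_not_mem_interior hw1 htr ℓ (h ▸ hp)
  have hqne : q ≠ 0 := fun h => zero_not_mem_interior hw1 htr ℓ (h ▸ hq)
  have hpa : 0 < ∑ i, p i * w i := htr p (Set.mem_iUnion.mpr ⟨ℓ, interior_subset hp⟩) hpne
  have hqa : 0 < ∑ i, q i * w i := htr q (Set.mem_iUnion.mpr ⟨ℓ, interior_subset hq⟩) hqne
  constructor
  · have h1 : (fun i => c * (((p i : ℂ) + (q i : ℂ)) + Complex.I * ((p i : ℂ) - (q i : ℂ))))
        = c • (fun i => (((p i : ℂ) + (q i : ℂ)) + Complex.I * ((p i : ℂ) - (q i : ℂ)))) := by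
      funext i; simp
    rw [h1]
    exact smul_mem_interior_complexify hc (cplx_interior_mem hp hq)
  · rw [dot_formula]
    exact mul_ne_zero hc (re_pos_ne_zero (by linarith))

lemma step {d m : ℕ} {S : Set (Matrix (Fin d) (Fin d) ℝ)} {K : Fin m → Set (Fin d → ℝ)} {w : Fin d → ℝ}
    (hw1 : ∑ i, w i ^ 2 = 1)
    (htr : ∀ u ∈ ⋃ j, K j, u ≠ 0 → 0 < ∑ i, u i * w i)
    (hmap : ∀ A ∈ S, ∀ j, ∃ ℓ, ∀ u ∈ K j, u ≠ 0 →
      A.mulVec u ∈ interior (K ℓ) ∨ -A.mulVec u ∈ interior (K ℓ))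
    {A : Matrix (Fin d) (Fin d) ℝ} (hA : A ∈ S)
    {z : Fin d → ℂ} (hz : ∃ j, z ∈ complexify (K j)) (hz0 : z ≠ 0) :
    (∃ ℓ, Matrix.mulVec (A.map (fun x : ℝ => (x : ℂ))) z ∈ interior (complexify (K ℓ))) ∧
    (∑ i, Matrix.mulVec (A.map (fun x : ℝ => (x : ℂ))) z i * (w i : ℂ)) ≠ 0 := by
  obtain ⟨j, c₀, u₀, v₀, hu₀, hv₀, hzeq₀⟩ := hz
  have hc₀ : c₀ ≠ 0 := by
    rintro rfl
    exact hz0 (by rw [hzeq₀]; funext i; simp)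
  -- normalize so both u and v are nonzero
  obtain ⟨c, u, v, hu, hv, hune, hvne, hc, hzeq⟩ :
      ∃ (c : ℂ) (u v : Fin d → ℝ), u ∈ K j ∧ v ∈ K j ∧ u ≠ 0 ∧ v ≠ 0 ∧ c ≠ 0 ∧
        z = fun i => c * (((u i : ℂ) + (v i : ℂ)) + Complex.I * ((u i : ℂ) - (v i : ℂ))) := by
    rcases eq_or_ne u₀ 0 with hu0 | hu0
    · rcases eq_or_ne v₀ 0 with hv0 | hv0
      · exfalso; apply hz0; rw [hzeq₀, hu0, hv0]; funext i; simp
      · refine ⟨c₀ * (1 - Complex.I) / 2, v₀, v₀, hv₀, hv₀, hv0, hv0, ?_, ?_⟩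
        · simp [hc₀, Complex.ext_iff]
        · rw [hzeq₀]; funext i
          have : u₀ i = 0 := congrFun hu0 i
          rw [this]
          push_cast
          ring
    · rcases eq_or_ne v₀ 0 with hv0 | hv0
      · refine ⟨c₀ * (1 + Complex.I) / 2, u₀, u₀, hu₀, hu₀, hu0, hu0, ?_, ?_⟩
        · simp [hc₀, Complex.ext_iff]
        · rw [hzeq₀]; funext i
          have : v₀ i = 0 := congrFun hv0 i
          rw [this]
          push_cast
          ring
      · exact ⟨c₀, u₀, v₀, hu₀, hv₀, hu0, hv0, hc₀, hzeq₀⟩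
  obtain ⟨ℓ, hℓ⟩ := hmap A hA j
  have hAu := hℓ u hu hune
  have hAv := hℓ v hv hvne
  rw [hzeq, mulVecC_decomp]
  set P := A.mulVec u with hP
  set Q := A.mulVec v with hQ
  rcases hAu with h1 | h1 <;> rcases hAv with h2 | h2
  · -- P ∈ int, Q ∈ int
    have := good_point hw1 htr h1 h2 hc
    constructor
    · exact ⟨ℓ, this.1⟩
    · exact this.2
  · -- P ∈ int, -Q ∈ int : c₂ = c * I, roles (-Q, P)
    have heq : (fun i => c * (((P i : ℂ) + (Q i : ℂ)) + Complex.I * ((P i : ℂ) - (Q i : ℂ))))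
        = fun i => (c * Complex.I) * ((((-Q) i : ℂ) + (P i : ℂ)) + Complex.I * (((-Q) i : ℂ) - (P i : ℂ))) := by
      funext i
      push_cast
      have : Complex.I * Complex.I = -1 := Complex.I_mul_I
      simp only [Pi.neg_apply]
      push_cast
      ring_nf
      rw [Complex.I_sq]
      ring
    rw [heq]
    have := good_point hw1 htr h2 h1 (mul_ne_zero hc Complex.I_ne_zero)
    exact ⟨⟨ℓ, this.1⟩, this.2⟩
  · -- -P ∈ int, Q ∈ int : c₂ = -c*I, roles (Q, -P)
    have heq : (fun i => c * (((P i : ℂ) + (Q i : ℂ)) + Complex.I * ((P i : ℂ) - (Q i : ℂ))))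
        = fun i => (-(c * Complex.I)) * (((Q i : ℂ) + (((-P) i : ℂ))) + Complex.I * ((Q i : ℂ) - (((-P) i : ℂ)))) := by
      funext i
      simp only [Pi.neg_apply]
      push_cast
      ring_nf
      rw [Complex.I_sq]
      ring
    rw [heq]
    have := good_point hw1 htr h2 h1 (neg_ne_zero.mpr (mul_ne_zero hc Complex.I_ne_zero))
    exact ⟨⟨ℓ, this.1⟩, this.2⟩
  · -- -P, -Q ∈ int : c₂ = -c, roles (-P, -Q)
    have heq : (fun i => c * (((P i : ℂ) + (Q i : ℂ)) + Complex.I * ((P i : ℂ) - (Q i : ℂ))))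
        = fun i => (-c) * ((((-P) i : ℂ) + (((-Q) i : ℂ))) + Complex.I * (((-P) i : ℂ) - (((-Q) i : ℂ)))) := by
      funext i
      simp only [Pi.neg_apply]
      push_cast
      ring
    rw [heq]
    have := good_point hw1 htr h1 h2 (neg_ne_zero.mpr hc)
    exact ⟨⟨ℓ, this.1⟩, this.2⟩

lemma mulVecC_mul {d : ℕ} (A B : Matrix (Fin d) (Fin d) ℝ) (z : Fin d → ℂ) :
    mulVecC (A * B) z = mulVecC A (mulVecC B z) := by
  unfold mulVecC
  rw [show (A * B).map (fun x : ℝ => (x : ℂ))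
      = A.map (fun x : ℝ => (x : ℂ)) * B.map (fun x : ℝ => (x : ℂ)) from
    Matrix.map_mul (f := Complex.ofRealHom), ← Matrix.mulVec_mulVec]

lemma mulVecC_one {d : ℕ} (z : Fin d → ℂ) : mulVecC (1 : Matrix (Fin d) (Fin d) ℝ) z = z := by
  unfold mulVecC
  rw [show (1 : Matrix (Fin d) (Fin d) ℝ).map (fun x : ℝ => (x : ℂ)) = 1 from
    Matrix.map_one _ (by simp) (by simp), Matrix.one_mulVec]

lemma prod_lemma {d m : ℕ} {S : Set (Matrix (Fin d) (Fin d) ℝ)} {K : Fin m → Set (Fin d → ℝ)} {w : Fin d → ℝ}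
    (hw1 : ∑ i, w i ^ 2 = 1)
    (htr : ∀ u ∈ ⋃ j, K j, u ≠ 0 → 0 < ∑ i, u i * w i)
    (hmap : ∀ A ∈ S, ∀ j, ∃ ℓ, ∀ u ∈ K j, u ≠ 0 →
      A.mulVec u ∈ interior (K ℓ) ∨ -A.mulVec u ∈ interior (K ℓ)) :
    ∀ l : List (Matrix (Fin d) (Fin d) ℝ), (∀ M ∈ l, M ∈ S) →
    ∀ z : Fin d → ℂ, (∃ j, z ∈ interior (complexify (K j))) →
      (∑ i, z i * (w i : ℂ)) ≠ 0 →
    (∃ ℓ, mulVecC l.prod z ∈ interior (complexify (K ℓ))) ∧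
      (∑ i, mulVecC l.prod z i * (w i : ℂ)) ≠ 0 := by
  intro l
  induction l with
  | nil =>
    intro _ z hz hdot
    simpa [List.prod_nil, mulVecC_one] using ⟨hz, hdot⟩
  | cons A t ih =>
    intro hmem z hz hdot
    have ht := ih (fun M hM => hmem M (List.mem_cons_of_mem A hM)) z hz hdot
    obtain ⟨⟨ℓ, hℓ⟩, hdot'⟩ := ht
    set y := mulVecC t.prod z with hy
    have hyne : y ≠ 0 := by
      rintro h
      rw [h] at hdot'
      simp at hdot'
    have := step hw1 htr hmap (hmem A List.mem_cons_self)
      ⟨ℓ, interior_subset hℓ⟩ hyne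
    rw [List.prod_cons, mulVecC_mul]
    exact this

/-- Theorem 3.1(iv): Ω is a nonempty bounded relatively open subset of the hyperplane
⟨z,w⟩ = 1, on which each Ā (A in the generated semigroup) is a well-defined self-map. -/
theorem stmt6 {d m : ℕ} (hd : 1 ≤ d) (hm : 0 < m)
    (S : Set (Matrix (Fin d) (Fin d) ℝ)) (hSne : S.Nonempty) (hScpt : IsCompact S)
    (K : Fin m → Set (Fin d → ℝ)) (w : Fin d → ℝ) (hK : IsMulticone S K w)
    (Ω : Set (Fin d → ℂ))
    (hΩ : Ω = {z : Fin d → ℂ | (∃ j, z ∈ interior (complexify (K j))) ∧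
      ∑ i, z i * (w i : ℂ) = 1}) :
    Ω.Nonempty ∧ Bornology.IsBounded Ω ∧
    (∃ U : Set (Fin d → ℂ), IsOpen U ∧
      Ω = U ∩ {z : Fin d → ℂ | ∑ i, z i * (w i : ℂ) = 1}) ∧
    (∀ A ∈ semigroupOf S, ∀ z ∈ Ω,
      (∑ i, mulVecC A z i * (w i : ℂ)) ≠ 0 ∧
      (∑ i, mulVecC A z i * (w i : ℂ))⁻¹ • mulVecC A z ∈ Ω) := by

  obtain ⟨hcl, hcvx, hint, hcone, hw1, htr, hmap, hdisj⟩ := hK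
  obtain ⟨δ, hδpos, hδ⟩ := delta_exists hm hcl hcone htr
  refine ⟨?_, ?_, ?_, ?_⟩
  · -- Nonempty
    set j0 : Fin m := ⟨0, hm⟩
    obtain ⟨p, hp⟩ := hint j0
    have hpne : p ≠ 0 := fun h => zero_not_mem_interior hw1 htr j0 (h ▸ hp)
    set a : ℝ := ∑ i, p i * w i with ha
    have hapos : 0 < a := htr p (Set.mem_iUnion.mpr ⟨j0, interior_subset hp⟩) hpne
    have hcne : (((2 * a)⁻¹ : ℝ) : ℂ) ≠ 0 := by
      simp only [ne_eq, Complex.ofReal_eq_zero, inv_eq_zero]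
      positivity
    refine ⟨fun i => (((2 * a)⁻¹ : ℝ) : ℂ) *
      (((p i : ℂ) + (p i : ℂ)) + Complex.I * ((p i : ℂ) - (p i : ℂ))), ?_⟩
    rw [hΩ]
    refine ⟨⟨j0, (good_point hw1 htr hp hp hcne).1⟩, ?_⟩
    rw [dot_formula]
    rw [← ha]
    have hane : (a : ℂ) ≠ 0 := Complex.ofReal_ne_zero.mpr hapos.ne'
    push_cast
    field_simp
    ring
  · -- Bounded
    rw [isBounded_iff_forall_norm_le]
    refine ⟨δ⁻¹, ?_⟩
    intro z hz
    rw [hΩ] at hz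
    obtain ⟨⟨j, hzj⟩, hzdot⟩ := hz
    obtain ⟨c, u, v, hu, hv, hzeq⟩ := interior_subset hzj
    set a : ℝ := ∑ i, u i * w i with ha
    set b : ℝ := ∑ i, v i * w i with hb
    have hdotf : ∑ i, z i * (w i : ℂ) = c * (((a : ℂ) + (b : ℂ)) + Complex.I * ((a : ℂ) - (b : ℂ))) := by
      rw [hzeq]
      exact dot_formula c u v w
    have key : ‖c‖ ^ 2 * ((a + b) ^ 2 + (a - b) ^ 2) = 1 := by
      have h1 : ‖∑ i, z i * (w i : ℂ)‖ = 1 := by rw [hzdot]; simp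
      rw [hdotf, norm_mul] at h1
      have h2 : ‖((a : ℂ) + (b : ℂ)) + Complex.I * ((a : ℂ) - (b : ℂ))‖ ^ 2
          = (a + b) ^ 2 + (a - b) ^ 2 := by
        rw [show ((a : ℂ) + (b : ℂ)) + Complex.I * ((a : ℂ) - (b : ℂ))
            = (((a + b : ℝ)) : ℂ) + Complex.I * (((a - b : ℝ)) : ℂ) by push_cast; ring]
        exact abs_sq_eq (a + b) (a - b)
      calc ‖c‖ ^ 2 * ((a + b) ^ 2 + (a - b) ^ 2)
          = (‖c‖ * ‖((a : ℂ) + (b : ℂ)) + Complex.I * ((a : ℂ) - (b : ℂ))‖) ^ 2 := by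
            rw [mul_pow, h2]
        _ = 1 := by rw [h1]; norm_num
    have hc2 : (0:ℝ) ≤ ‖c‖ ^ 2 := by positivity
    have hua : δ ^ 2 * (∑ i, w i * 0) ≤ 0 := by simp
    have hu2 : ∀ i, δ ^ 2 * (u i) ^ 2 ≤ a ^ 2 := by
      intro i
      have h3 : |u i| ≤ ‖u‖ := norm_le_pi_norm u i
      have h4 : δ * ‖u‖ ≤ a := hδ j u hu
      have h5 : δ * |u i| ≤ a := le_trans (mul_le_mul_of_nonneg_left h3 hδpos.le) h4
      have h6 : (0:ℝ) ≤ δ * |u i| := by positivity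
      calc δ ^ 2 * (u i) ^ 2 = (δ * |u i|) ^ 2 := by rw [mul_pow, sq_abs]
        _ ≤ a ^ 2 := pow_le_pow_left₀ h6 h5 2
    have hv2 : ∀ i, δ ^ 2 * (v i) ^ 2 ≤ b ^ 2 := by
      intro i
      have h3 : |v i| ≤ ‖v‖ := norm_le_pi_norm v i
      have h4 : δ * ‖v‖ ≤ b := hδ j v hv
      have h5 : δ * |v i| ≤ b := le_trans (mul_le_mul_of_nonneg_left h3 hδpos.le) h4
      have h6 : (0:ℝ) ≤ δ * |v i| := by positivity
      calc δ ^ 2 * (v i) ^ 2 = (δ * |v i|) ^ 2 := by rw [mul_pow, sq_abs]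
        _ ≤ b ^ 2 := pow_le_pow_left₀ h6 h5 2
    rw [pi_norm_le_iff_of_nonneg (by positivity)]
    intro i
    have hzi : z i = c * (((u i : ℂ) + (v i : ℂ)) + Complex.I * ((u i : ℂ) - (v i : ℂ))) :=
      congrFun hzeq i
    have hzisq : ‖z i‖ ^ 2 = ‖c‖ ^ 2 * ((u i + v i) ^ 2 + (u i - v i) ^ 2) := by
      rw [hzi, norm_mul, mul_pow]
      congr 1
      rw [show ((u i : ℂ) + (v i : ℂ)) + Complex.I * ((u i : ℂ) - (v i : ℂ))
          = (((u i + v i : ℝ)) : ℂ) + Complex.I * (((u i - v i : ℝ)) : ℂ) by push_cast; ring]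
      exact abs_sq_eq (u i + v i) (u i - v i)
    have h7 : δ ^ 2 * ‖z i‖ ^ 2 ≤ 1 := by
      have e1 : δ ^ 2 * ‖z i‖ ^ 2
          = ‖c‖ ^ 2 * ((δ ^ 2 * (u i) ^ 2 + δ ^ 2 * (v i) ^ 2) * 2) := by
        rw [hzisq]; ring
      rw [e1]
      calc ‖c‖ ^ 2 * ((δ ^ 2 * (u i) ^ 2 + δ ^ 2 * (v i) ^ 2) * 2)
          ≤ ‖c‖ ^ 2 * ((a ^ 2 + b ^ 2) * 2) := by
            apply mul_le_mul_of_nonneg_left _ hc2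
            have := hu2 i
            have := hv2 i
            linarith
        _ = 1 := by linear_combination key
    have h8 : δ * ‖z i‖ ≤ 1 := by
      nlinarith [sq_nonneg (δ * ‖z i‖ - 1), norm_nonneg (z i), hδpos]
    calc ‖z i‖ = δ⁻¹ * (δ * ‖z i‖) := by field_simp
      _ ≤ δ⁻¹ * 1 := mul_le_mul_of_nonneg_left h8 (by positivity)
      _ = δ⁻¹ := mul_one _
  · -- relatively open
    refine ⟨⋃ j, interior (complexify (K j)), isOpen_iUnion fun j => isOpen_interior, ?_⟩
    rw [hΩ]
    ext z
    simp [Set.mem_iUnion]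
  · -- semigroup action
    intro A hA z hz
    obtain ⟨l, -, hlmem, rfl⟩ := hA
    rw [hΩ] at hz
    obtain ⟨⟨j, hzj⟩, hzdot⟩ := hz
    have hzdne : (∑ i, z i * (w i : ℂ)) ≠ 0 := by rw [hzdot]; exact one_ne_zero
    obtain ⟨⟨ℓ, hmemℓ⟩, hdotne⟩ :=
      prod_lemma hw1 htr hmap l hlmem z ⟨j, hzj⟩ hzdne
    refine ⟨hdotne, ?_⟩
    rw [hΩ]
    set y := mulVecC l.prod z with hy
    set s : ℂ := ∑ i, y i * (w i : ℂ) with hs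
    refine ⟨⟨ℓ, smul_mem_interior_complexify (inv_ne_zero hdotne) hmemℓ⟩, ?_⟩
    have : ∑ i, (s⁻¹ • y) i * (w i : ℂ) = s⁻¹ * ∑ i, y i * (w i : ℂ) := by
      rw [Finset.mul_sum]
      exact Finset.sum_congr rfl fun i _ => by simp; ring
    rw [this, ← hs]
    exact inv_mul_cancel₀ hdotne
end

section
/- Let d ≥ 1 and let 𝖠 ⊆ M_d(ℝ) be compact and nonempty with a multicone (K_1,…,K_m) and transverse-defining vector w. Then there exist constants C, γ > 0 such that for every n ≥ 1, every A_1,…,A_n ∈ 𝖠, and every pair of nonzero z_1, z_2 ∈ K_1^ℂ ∪ ⋯ ∪ K_m^ℂ, the quantities ⟨A_n⋯A_1 z_1, w⟩ and ⟨A_n⋯A_1 z_2, w⟩ are nonzero and ‖ (A_n⋯A_1 z_1)/⟨A_n⋯A_1 z_1, w⟩ − (A_n⋯A_1 z_2)/⟨A_n⋯A_1 z_2, w⟩ ‖ ≤ C·e^{−γn}. -/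
open scoped BigOperators Pointwise

open Matrix Set
open scoped Pointwise

namespace S7

/-- Context bundling all hypotheses. -/
structure Ctx (d m : ℕ) where
  S : Set (Matrix (Fin d) (Fin d) ℝ)
  K : Fin m → Set (Fin d → ℝ)
  w : Fin d → ℝ
  hd : 1 ≤ d
  hm : 0 < m
  hSne : S.Nonempty
  hScpt : IsCompact S
  hcl : ∀ j, IsClosed (K j)
  hcv : ∀ j, Convex ℝ (K j)
  hintne : ∀ j, (interior (K j)).Nonempty
  hsm : ∀ j, ∀ c : ℝ, 0 ≤ c → ∀ u ∈ K j, c • u ∈ K j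
  hw1 : ∑ i, w i ^ 2 = 1
  hpos : ∀ u ∈ ⋃ j, K j, u ≠ 0 → 0 < ∑ i, u i * w i
  hmap : ∀ A ∈ S, ∀ j, ∃ ℓ, ∀ u ∈ K j, u ≠ 0 →
    A.mulVec u ∈ interior (K ℓ) ∨ -A.mulVec u ∈ interior (K ℓ)
  hdisj : ∀ j₁ j₂, j₁ ≠ j₂ → K j₁ ∩ K j₂ = {0}

variable {d m : ℕ} (C : Ctx d m)

/-- inner product with w -/
def Ctx.ip (x : Fin d → ℝ) : ℝ := x ⬝ᵥ C.w

lemma Ctx.ip_def (x : Fin d → ℝ) : C.ip x = ∑ i, x i * C.w i := rfl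

lemma Ctx.ip_pos {j : Fin m} {x : Fin d → ℝ} (hx : x ∈ C.K j) (hx0 : x ≠ 0) :
    0 < C.ip x :=
  C.hpos x (mem_iUnion.2 ⟨j, hx⟩) hx0

lemma Ctx.zero_mem (j : Fin m) : (0 : Fin d → ℝ) ∈ C.K j := by
  obtain ⟨x, hx⟩ := C.hintne j
  simpa using C.hsm j 0 le_rfl x (interior_subset hx)

lemma Ctx.ip_nonneg {j : Fin m} {x : Fin d → ℝ} (hx : x ∈ C.K j) : 0 ≤ C.ip x := by
  rcases eq_or_ne x 0 with h | h
  · simp [h, Ctx.ip]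
  · exact (C.ip_pos hx h).le

lemma Ctx.add_mem {j : Fin m} {x y : Fin d → ℝ} (hx : x ∈ C.K j) (hy : y ∈ C.K j) :
    x + y ∈ C.K j := by
  have h := C.hcv j hx hy (by norm_num : (0:ℝ) ≤ 1/2) (by norm_num : (0:ℝ) ≤ 1/2) (by norm_num)
  have h2 := C.hsm j 2 (by norm_num) _ h
  convert h2 using 1
  ext i; simp; ring

lemma Ctx.ip_add (x y : Fin d → ℝ) : C.ip (x + y) = C.ip x + C.ip y := by
  simp [Ctx.ip, add_dotProduct]

lemma Ctx.ip_smul (c : ℝ) (x : Fin d → ℝ) : C.ip (c • x) = c * C.ip x := by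
  simp [Ctx.ip, smul_dotProduct]

lemma Ctx.ip_sub (x y : Fin d → ℝ) : C.ip (x - y) = C.ip x - C.ip y := by
  simp [Ctx.ip, sub_dotProduct]

lemma Ctx.w_ne_zero : C.w ≠ 0 := by
  intro h
  have := C.hw1
  rw [h] at this
  simp at this

lemma Ctx.zero_not_mem_interior (j : Fin m) : (0 : Fin d → ℝ) ∉ interior (C.K j) := by
  intro h0
  obtain ⟨r, hr, hball⟩ := Metric.isOpen_iff.1 isOpen_interior 0 h0
  -- the point -(t) • w with small t
  have hwn : 0 < ‖C.w‖ := norm_pos_iff.2 C.w_ne_zero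
  set t := r / (2 * ‖C.w‖) with ht
  have htpos : 0 < t := div_pos hr (by positivity)
  have hmem : (-t) • C.w ∈ C.K j := by
    apply interior_subset; apply hball
    simp only [Metric.mem_ball, dist_zero_right, norm_smul, norm_neg, Real.norm_eq_abs,
      abs_of_pos htpos]
    calc t * ‖C.w‖ = r / 2 := by rw [ht]; field_simp
    _ < r := by linarith
  have hne : (-t) • C.w ≠ 0 := by
    simp only [ne_eq, smul_eq_zero, neg_eq_zero, not_or]
    exact ⟨by linarith, C.w_ne_zero⟩
  have := C.ip_pos hmem hne
  rw [C.ip_smul] at this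
  have hip : C.ip C.w = 1 := by
    have : C.ip C.w = ∑ i, C.w i ^ 2 := by
      rw [C.ip_def]; congr 1; ext i; ring
    rw [this, C.hw1]
  rw [hip] at this
  linarith

lemma Ctx.exists_ne_zero (j : Fin m) : ∃ x ∈ C.K j, x ≠ 0 := by
  obtain ⟨x, hx⟩ := C.hintne j
  refine ⟨x, interior_subset hx, ?_⟩
  intro h; rw [h] at hx; exact C.zero_not_mem_interior j hx

lemma Ctx.interior_ne_zero {j : Fin m} {x : Fin d → ℝ} (hx : x ∈ interior (C.K j)) : x ≠ 0 := by
  intro h; rw [h] at hx; exact C.zero_not_mem_interior j hx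

lemma Ctx.smul_interior {j : Fin m} {c : ℝ} (hc : 0 < c) {x : Fin d → ℝ}
    (hx : x ∈ interior (C.K j)) : c • x ∈ interior (C.K j) := by
  have h1 : c • x ∈ c • interior (C.K j) := Set.smul_mem_smul_set hx
  rw [← interior_smul₀ (ne_of_gt hc)] at h1
  have h2 : c • C.K j ⊆ C.K j := by
    rintro _ ⟨y, hy, rfl⟩; exact C.hsm j c hc.le y hy
  exact interior_mono h2 h1


variable {d m : ℕ} (C : Ctx d m)

lemma Ctx.ip_continuous : Continuous C.ip := by
  unfold Ctx.ip dotProduct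
  exact continuous_finset_sum _ fun i _ => (continuous_apply i).mul continuous_const

lemma Ctx.ip_continuous' {X : Type*} [TopologicalSpace X] {f : X → Fin d → ℝ}
    (hf : Continuous f) : Continuous fun x => C.ip (f x) := C.ip_continuous.comp hf

/-- lower norm bound constant -/
lemma Ctx.exists_c1 : ∃ c₁ : ℝ, 0 < c₁ ∧ ∀ j, ∀ x ∈ C.K j, c₁ * ‖x‖ ≤ C.ip x := by
  have key : ∀ j : Fin m, ∃ c > 0, ∀ x ∈ C.K j, c * ‖x‖ ≤ C.ip x := by
    intro j
    set U : Set (Fin d → ℝ) := Metric.sphere 0 1 ∩ C.K j with hU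
    have hUcpt : IsCompact U := (isCompact_sphere 0 1).inter_right (C.hcl j)
    have hUne : U.Nonempty := by
      obtain ⟨x, hx, hx0⟩ := C.exists_ne_zero j
      refine ⟨‖x‖⁻¹ • x, ?_, C.hsm j _ (by positivity) x hx⟩
      simp [norm_smul, norm_pos_iff.2 hx0, inv_mul_cancel₀ (norm_ne_zero_iff.2 hx0)]
    obtain ⟨x₀, hx₀U, hmin⟩ := hUcpt.exists_isMinOn hUne (C.ip_continuous.continuousOn)
    have hx₀0 : x₀ ≠ 0 := by
      intro h; rw [h] at hx₀U
      have := hx₀U.1; simp at this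
    refine ⟨C.ip x₀, C.ip_pos hx₀U.2 hx₀0, ?_⟩
    intro x hx
    rcases eq_or_ne x 0 with rfl | hx0
    · simp [Ctx.ip]
    · have hxu : ‖x‖⁻¹ • x ∈ U := by
        constructor
        · simp [norm_smul, inv_mul_cancel₀ (norm_ne_zero_iff.2 hx0)]
        · exact C.hsm j _ (by positivity) x hx
      have := hmin hxu
      simp only [IsMinOn, IsMinFilter] at this
      have h2 : C.ip x₀ ≤ C.ip (‖x‖⁻¹ • x) := this
      rw [C.ip_smul] at h2
      have hn : 0 < ‖x‖ := norm_pos_iff.2 hx0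
      calc C.ip x₀ * ‖x‖ ≤ (‖x‖⁻¹ * C.ip x) * ‖x‖ := by
            apply mul_le_mul_of_nonneg_right h2 hn.le
      _ = C.ip x := by field_simp
  choose cf hcf hcf2 using key
  have hne : (Finset.univ : Finset (Fin m)).Nonempty := by
    have : Nonempty (Fin m) := ⟨⟨0, C.hm⟩⟩
    exact Finset.univ_nonempty
  refine ⟨Finset.univ.inf' hne cf, ?_, ?_⟩
  · obtain ⟨j, _, hj⟩ := Finset.exists_mem_eq_inf' hne cf
    rw [hj]; exact hcf j
  · intro j x hx
    calc Finset.univ.inf' hne cf * ‖x‖ ≤ cf j * ‖x‖ := by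
          apply mul_le_mul_of_nonneg_right (Finset.inf'_le _ (Finset.mem_univ j)) (norm_nonneg x)
    _ ≤ C.ip x := hcf2 j x hx

/-- a normalized interior point in each cone -/
lemma Ctx.exists_v : ∃ v : Fin m → (Fin d → ℝ),
    ∀ j, v j ∈ interior (C.K j) ∧ C.ip (v j) = 1 := by
  have : ∀ j : Fin m, ∃ vj, vj ∈ interior (C.K j) ∧ C.ip vj = 1 := by
    intro j
    obtain ⟨x, hx⟩ := C.hintne j
    have hx0 : x ≠ 0 := C.interior_ne_zero hx
    have hip : 0 < C.ip x := C.ip_pos (interior_subset hx) hx0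
    refine ⟨(C.ip x)⁻¹ • x, C.smul_interior (by positivity) hx, ?_⟩
    rw [C.ip_smul]; field_simp
  choose v hv using this
  exact ⟨v, hv⟩

variable {d m : ℕ} (C : Ctx d m)

/-- mapping property of a matrix from cone j to cone ℓ -/
def Ctx.Good (B : Matrix (Fin d) (Fin d) ℝ) (j ℓ : Fin m) : Prop :=
  ∀ u ∈ C.K j, u ≠ 0 → B.mulVec u ∈ interior (C.K ℓ) ∨ -B.mulVec u ∈ interior (C.K ℓ)

/-- normalized projective action -/
noncomputable def Ctx.T (B : Matrix (Fin d) (Fin d) ℝ) (x : Fin d → ℝ) : Fin d → ℝ :=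
  (C.ip (B.mulVec x))⁻¹ • B.mulVec x

lemma Ctx.Good.ip_ne {B : Matrix (Fin d) (Fin d) ℝ} {j ℓ : Fin m} (hg : C.Good B j ℓ)
    {u : Fin d → ℝ} (hu : u ∈ C.K j) (hu0 : u ≠ 0) : C.ip (B.mulVec u) ≠ 0 := by
  rcases hg u hu hu0 with h | h
  · exact ne_of_gt (C.ip_pos (interior_subset h) (C.interior_ne_zero h))
  · have h2 := C.ip_pos (interior_subset h) (C.interior_ne_zero h)
    rw [show (-B.mulVec u) = (-1 : ℝ) • B.mulVec u by ext i; simp, C.ip_smul] at h2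
    intro hc; rw [hc] at h2; simp at h2

lemma Ctx.Good.T_mem {B : Matrix (Fin d) (Fin d) ℝ} {j ℓ : Fin m} (hg : C.Good B j ℓ)
    {u : Fin d → ℝ} (hu : u ∈ C.K j) (hu0 : u ≠ 0) :
    C.T B u ∈ interior (C.K ℓ) ∧ C.ip (C.T B u) = 1 := by
  have hne := hg.ip_ne C hu hu0
  constructor
  · rcases hg u hu hu0 with h | h
    · have hpos := C.ip_pos (interior_subset h) (C.interior_ne_zero h)
      exact C.smul_interior (by positivity) h
    · have hpos := C.ip_pos (interior_subset h) (C.interior_ne_zero h)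
      have hipneg : C.ip (B.mulVec u) < 0 := by
        rw [show (-B.mulVec u) = (-1 : ℝ) • B.mulVec u by ext i; simp, C.ip_smul] at hpos
        linarith
      have heq : C.T B u = (-(C.ip (B.mulVec u)))⁻¹ • (-B.mulVec u) := by
        unfold Ctx.T; ext i; simp
      rw [heq]
      exact C.smul_interior (inv_pos.2 (neg_pos.2 hipneg)) h
  · unfold Ctx.T; rw [C.ip_smul]; field_simp

lemma Ctx.T_smul (B : Matrix (Fin d) (Fin d) ℝ) (x : Fin d → ℝ) {c : ℝ} (hc : c ≠ 0) :
    C.T B (c • x) = C.T B x := by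
  unfold Ctx.T
  rw [Matrix.mulVec_smul, C.ip_smul, smul_smul]
  congr 1
  rcases eq_or_ne (C.ip (B.mulVec x)) 0 with h | h
  · simp [h]
  · field_simp

/-- products of matrices in S satisfy Good -/
lemma Ctx.prod_good : ∀ (l : List (Matrix (Fin d) (Fin d) ℝ)), l ≠ [] →
    (∀ M ∈ l, M ∈ C.S) → ∀ j, ∃ ℓ, C.Good l.prod j ℓ := by
  intro l
  induction l with
  | nil => intro h; exact absurd rfl h
  | cons A l' ih =>
    intro _ hS j
    rcases eq_or_ne l' [] with rfl | hl'
    · simp only [List.prod_cons, List.prod_nil, mul_one]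
      exact C.hmap A (hS A (by simp)) j
    · obtain ⟨ℓ', h'⟩ := ih hl' (fun M hM => hS M (by simp [hM])) j
      obtain ⟨ℓ, hA⟩ := C.hmap A (hS A (by simp)) ℓ'
      refine ⟨ℓ, ?_⟩
      intro u hu hu0
      have hx := h' u hu hu0
      have hrw : (A :: l').prod.mulVec u = A.mulVec (l'.prod.mulVec u) := by
        rw [List.prod_cons, ← Matrix.mulVec_mulVec]
      rw [hrw]
      rcases hx with h | h
      · exact hA _ (interior_subset h) (C.interior_ne_zero h)
      · have := hA _ (interior_subset h) (C.interior_ne_zero h)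
        rw [Matrix.mulVec_neg] at this
        rcases this with h2 | h2
        · right; exact h2
        · left; rw [neg_neg] at h2; exact h2

/-- uniqueness of the target cone -/
lemma Ctx.good_unique {B : Matrix (Fin d) (Fin d) ℝ} {j ℓ₁ ℓ₂ : Fin m}
    (h₁ : C.Good B j ℓ₁) (h₂ : C.Good B j ℓ₂) : ℓ₁ = ℓ₂ := by
  by_contra hne
  obtain ⟨u₀, hu₀, hu₀0⟩ := C.exists_ne_zero j
  have hy0 : B.mulVec u₀ ≠ 0 := by
    rcases h₁ u₀ hu₀ hu₀0 with h | h
    · exact C.interior_ne_zero h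
    · exact neg_ne_zero.mp (C.interior_ne_zero h)
  have hdisjKK := C.hdisj ℓ₁ ℓ₂ hne
  have key : ∀ z : Fin d → ℝ, z ≠ 0 → z ∈ C.K ℓ₁ → z ∈ C.K ℓ₂ → False := by
    intro z hz h1 h2
    have : z ∈ C.K ℓ₁ ∩ C.K ℓ₂ := ⟨h1, h2⟩
    rw [hdisjKK] at this; exact hz this
  have hipy : C.ip (-(B.mulVec u₀)) = - C.ip (B.mulVec u₀) := by
    rw [show (-(B.mulVec u₀)) = (-1 : ℝ) • (B.mulVec u₀) by ext i; simp, C.ip_smul]; ring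
  rcases h₁ u₀ hu₀ hu₀0 with ha | ha <;> rcases h₂ u₀ hu₀ hu₀0 with hb | hb
  · exact key _ hy0 (interior_subset ha) (interior_subset hb)
  · have p1 := C.ip_pos (interior_subset ha) (C.interior_ne_zero ha)
    have p2 := C.ip_pos (interior_subset hb) (C.interior_ne_zero hb)
    rw [hipy] at p2; linarith
  · have p1 := C.ip_pos (interior_subset ha) (C.interior_ne_zero ha)
    have p2 := C.ip_pos (interior_subset hb) (C.interior_ne_zero hb)
    rw [hipy] at p1; linarith
  · exact key _ (neg_ne_zero.mpr hy0) (interior_subset ha) (interior_subset hb)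

/-- sign constancy on a cone -/
lemma Ctx.sign_const {B : Matrix (Fin d) (Fin d) ℝ} {j ℓ : Fin m} (hg : C.Good B j ℓ) :
    ∃ s : ℝ, (s = 1 ∨ s = -1) ∧ ∀ u ∈ C.K j, u ≠ 0 → 0 < s * C.ip (B.mulVec u) := by
  obtain ⟨u₀, hu₀, hu₀0⟩ := C.exists_ne_zero j
  set g0 := C.ip (B.mulVec u₀) with hg0
  have hg0ne : g0 ≠ 0 := hg.ip_ne C hu₀ hu₀0
  refine ⟨if 0 < g0 then 1 else -1, by split <;> simp, ?_⟩
  intro u hu hu0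
  set g1 := C.ip (B.mulVec u) with hg1
  have hg1ne : g1 ≠ 0 := hg.ip_ne C hu hu0
  -- it suffices to rule out opposite signs
  have hsame : 0 < g0 * g1 ∨ g0 * g1 < 0 := by
    rcases lt_trichotomy (g0 * g1) 0 with h | h | h
    · right; exact h
    · exact absurd h (mul_ne_zero hg0ne hg1ne)
    · left; exact h
  rcases hsame with hsame | hopp
  · rcases lt_or_gt_of_ne hg0ne with h0 | h0
    · have h1 : g1 < 0 := by nlinarith
      simp only [if_neg (not_lt.2 h0.le)]; nlinarith
    · have h1 : 0 < g1 := by nlinarith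
      simp only [if_pos h0]; nlinarith
  · exfalso
    set t := g0 / (g0 - g1) with ht
    have hden : g0 - g1 ≠ 0 := by
      intro h; have : g0 = g1 := by linarith
      rw [this] at hopp; nlinarith
    have hkey : t * (g0 - g1) = g0 := div_mul_cancel₀ _ hden
    have hsigns : (g0 < 0 ∧ 0 < g1) ∨ (0 < g0 ∧ g1 < 0) := by
      rcases lt_or_gt_of_ne hg0ne with h0 | h0
      · left; exact ⟨h0, by nlinarith⟩
      · right; exact ⟨h0, by nlinarith⟩
    have ht0 : 0 < t := by rcases hsigns with ⟨h0, h1⟩ | ⟨h0, h1⟩ <;> nlinarith [hkey]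
    have ht1 : t < 1 := by
      rcases hsigns with ⟨h0, h1⟩ | ⟨h0, h1⟩ <;> nlinarith [hkey]
    set ustar := (1 - t) • u₀ + t • u with hustar
    have hmem : ustar ∈ C.K j := C.hcv j hu₀ hu (by linarith) (by linarith) (by ring)
    have hipustar : 0 < C.ip ustar := by
      rw [hustar, C.ip_add, C.ip_smul, C.ip_smul]
      have p0 := C.ip_pos hu₀ hu₀0
      have p1 := C.ip_pos hu hu0
      nlinarith
    have hustar0 : ustar ≠ 0 := by
      intro h; rw [h] at hipustar; simp [Ctx.ip] at hipustar
    have hzero : C.ip (B.mulVec ustar) = 0 := by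
      rw [hustar, Matrix.mulVec_add, Matrix.mulVec_smul, Matrix.mulVec_smul,
        C.ip_add, C.ip_smul, C.ip_smul, ← hg0, ← hg1]
      field_simp [ht]
      linarith [hkey]
    exact hg.ip_ne C hmem hustar0 hzero
variable {d m : ℕ} (C : Ctx d m)

lemma Ctx.ne_zero_of_ip_one {x : Fin d → ℝ} (h : C.ip x = 1) : x ≠ 0 := by
  intro h0; rw [h0] at h; simp [Ctx.ip] at h

/-- the normalized slice of a cone -/
def Ctx.Sl (j : Fin m) : Set (Fin d → ℝ) := {x | x ∈ C.K j ∧ C.ip x = 1}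

lemma Ctx.Sl_compact (j : Fin m) : IsCompact (C.Sl j) := by
  obtain ⟨c₁, hc₁, hc₁'⟩ := C.exists_c1
  have hclosed : IsClosed (C.Sl j) := by
    have : C.Sl j = C.K j ∩ (C.ip ⁻¹' {1}) := rfl
    rw [this]
    exact (C.hcl j).inter (isClosed_singleton.preimage C.ip_continuous)
  have hsub : C.Sl j ⊆ Metric.closedBall 0 c₁⁻¹ := by
    rintro x ⟨hx, hip⟩
    simp only [Metric.mem_closedBall, dist_zero_right]
    have := hc₁' j x hx
    rw [hip] at this
    rw [← one_div, le_div_iff₀ hc₁]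
    nlinarith
  exact (isCompact_closedBall 0 c₁⁻¹).of_isClosed_subset hclosed hsub

lemma Ctx.Sl_mem_of {j : Fin m} {x : Fin d → ℝ} (hx : x ∈ C.K j) (hx0 : x ≠ 0) :
    (C.ip x)⁻¹ • x ∈ C.Sl j := by
  have h := C.ip_pos hx hx0
  exact ⟨C.hsm j _ (by positivity) x hx, by rw [C.ip_smul]; field_simp⟩

lemma mulVec_pair_continuous :
    Continuous (fun p : Matrix (Fin d) (Fin d) ℝ × (Fin d → ℝ) => p.1.mulVec p.2) := by
  apply continuous_pi
  intro i
  unfold Matrix.mulVec dotProduct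
  apply continuous_finset_sum
  intro k _
  exact (((continuous_apply k).comp ((continuous_apply i).comp continuous_fst))).mul
    ((continuous_apply k).comp continuous_snd)

/-- Uniform minorization via compactness. -/
lemma Ctx.minorization (v : Fin m → Fin d → ℝ)
    (hv : ∀ j, v j ∈ interior (C.K j) ∧ C.ip (v j) = 1)
    (S' : Set (Matrix (Fin d) (Fin d) ℝ)) (hS' : IsCompact S') (j : Fin m)
    (hax : ∀ A ∈ S', ∃ ℓ, C.Good A j ℓ) :
    ∃ ε : ℝ, 0 < ε ∧ ε ≤ 1/2 ∧ ∀ A ∈ S', ∀ ℓ', C.Good A j ℓ' →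
      ∀ x ∈ C.K j, x ≠ 0 →
        (C.T A x - ε • v ℓ' ∈ C.K ℓ') ∧ (v ℓ' - ε • C.T A x ∈ C.K ℓ') := by
  rcases S'.eq_empty_or_nonempty with rfl | hS'ne
  · exact ⟨1/2, by norm_num, le_refl _, by simp⟩
  set F : Matrix (Fin d) (Fin d) ℝ × (Fin d → ℝ) → (Fin d → ℝ) :=
    fun p => p.1.mulVec p.2 with hF
  set G : Matrix (Fin d) (Fin d) ℝ × (Fin d → ℝ) → (Fin d → ℝ) :=
    fun p => (C.ip (F p))⁻¹ • F p with hG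
  have hFc : Continuous F := mulVec_pair_continuous
  set V : Set (Matrix (Fin d) (Fin d) ℝ × (Fin d → ℝ)) := {p | C.ip (F p) ≠ 0} with hV
  have hVopen : IsOpen V := isOpen_ne.preimage (C.ip_continuous.comp hFc)
  have hGc : ContinuousOn G V := by
    apply ContinuousOn.fun_smul
    · exact ContinuousOn.inv₀ ((C.ip_continuous.comp hFc).continuousOn) (fun p hp => hp)
    · exact hFc.continuousOn
  set P : Set (Matrix (Fin d) (Fin d) ℝ × (Fin d → ℝ)) := S' ×ˢ C.Sl j with hP
  have hPcpt : IsCompact P := hS'.prod (C.Sl_compact j)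
  -- for each z in P choose εz, ℓz, and an open neighborhood
  have key : ∀ z ∈ P, ∃ (εz : ℝ) (ℓz : Fin m), 0 < εz ∧ εz ≤ 1/2 ∧
      z ∈ V ∧ G z - εz • v ℓz ∈ interior (C.K ℓz) ∧
      v ℓz - εz • G z ∈ interior (C.K ℓz) := by
    rintro ⟨A, x⟩ ⟨hA, hx, hipx⟩
    obtain ⟨ℓz, hgood⟩ := hax A hA
    have hx0 : x ≠ 0 := C.ne_zero_of_ip_one hipx
    have hipne : C.ip (A.mulVec x) ≠ 0 := hgood.ip_ne C hx hx0
    have hy := hgood.T_mem C hx hx0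
    have hyG : G (A, x) = C.T A x := rfl
    set y := C.T A x with hy'
    obtain ⟨r, hr, hball⟩ := Metric.isOpen_iff.1 isOpen_interior y hy.1
    obtain ⟨r₂, hr₂, hball₂⟩ := Metric.isOpen_iff.1 isOpen_interior (v ℓz) (hv ℓz).1
    set εz := min (1/2) (min (r / (2 * (‖v ℓz‖ + 1))) (r₂ / (2 * (‖y‖ + 1)))) with hεz
    have hεz0 : 0 < εz := by
      apply lt_min (by norm_num)
      apply lt_min <;> positivity
    refine ⟨εz, ℓz, hεz0, min_le_left _ _, hipne, ?_, ?_⟩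
    · rw [hyG]
      apply hball
      simp only [Metric.mem_ball, dist_eq_norm]
      have h1 : ‖y - εz • v ℓz - y‖ = εz * ‖v ℓz‖ := by
        rw [show y - εz • v ℓz - y = -(εz • v ℓz) by ring_nf, norm_neg, norm_smul,
          Real.norm_eq_abs, abs_of_pos hεz0]
      rw [h1]
      have h2 : εz ≤ r / (2 * (‖v ℓz‖ + 1)) := le_trans (min_le_right _ _) (min_le_left _ _)
      have h3 : 0 ≤ ‖v ℓz‖ := norm_nonneg _
      calc εz * ‖v ℓz‖ ≤ r / (2 * (‖v ℓz‖ + 1)) * ‖v ℓz‖ := by nlinarith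
      _ < r := by
          rw [div_mul_eq_mul_div, div_lt_iff₀ (by positivity)]
          nlinarith
    · rw [hyG]
      apply hball₂
      simp only [Metric.mem_ball, dist_eq_norm]
      have h1 : ‖v ℓz - εz • y - v ℓz‖ = εz * ‖y‖ := by
        rw [show v ℓz - εz • y - v ℓz = -(εz • y) by ring_nf, norm_neg, norm_smul,
          Real.norm_eq_abs, abs_of_pos hεz0]
      rw [h1]
      have h2 : εz ≤ r₂ / (2 * (‖y‖ + 1)) := le_trans (min_le_right _ _) (min_le_right _ _)
      have h3 : 0 ≤ ‖y‖ := norm_nonneg _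
      calc εz * ‖y‖ ≤ r₂ / (2 * (‖y‖ + 1)) * ‖y‖ := by nlinarith
      _ < r₂ := by
          rw [div_mul_eq_mul_div, div_lt_iff₀ (by positivity)]
          nlinarith
  haveI : Inhabited (Fin m) := ⟨⟨0, C.hm⟩⟩
  choose! εf ℓf hεf0 hεf12 hVz hcond1 hcond2 using key
  -- the open sets
  set U : {z // z ∈ P} → Set (Matrix (Fin d) (Fin d) ℝ × (Fin d → ℝ)) :=
    fun z => V ∩ (G ⁻¹' {y | y - εf z.1 • v (ℓf z.1) ∈ interior (C.K (ℓf z.1)) ∧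
      v (ℓf z.1) - εf z.1 • y ∈ interior (C.K (ℓf z.1))}) with hU
  have hUopen : ∀ z, IsOpen (U z) := by
    intro z
    apply hGc.isOpen_inter_preimage hVopen
    have h1 : IsOpen {y : Fin d → ℝ | y - εf z.1 • v (ℓf z.1) ∈ interior (C.K (ℓf z.1))} := by
      have : {y : Fin d → ℝ | y - εf z.1 • v (ℓf z.1) ∈ interior (C.K (ℓf z.1))} =
          (fun y => y - εf z.1 • v (ℓf z.1)) ⁻¹' interior (C.K (ℓf z.1)) := rfl
      rw [this]
      exact isOpen_interior.preimage (continuous_id.sub continuous_const)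
    have h2 : IsOpen {y : Fin d → ℝ | v (ℓf z.1) - εf z.1 • y ∈ interior (C.K (ℓf z.1))} := by
      have : {y : Fin d → ℝ | v (ℓf z.1) - εf z.1 • y ∈ interior (C.K (ℓf z.1))} =
          (fun y => v (ℓf z.1) - εf z.1 • y) ⁻¹' interior (C.K (ℓf z.1)) := rfl
      rw [this]
      exact isOpen_interior.preimage (continuous_const.sub (continuous_const.fun_smul continuous_id))
    exact h1.inter h2
  have hcover : P ⊆ ⋃ z : {z // z ∈ P}, U z := by
    intro z hz
    refine mem_iUnion.2 ⟨⟨z, hz⟩, hVz z hz, hcond1 z hz, hcond2 z hz⟩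
  obtain ⟨t, ht⟩ := hPcpt.elim_finite_subcover U hUopen hcover
  -- t is nonempty since P is nonempty
  have hPne : P.Nonempty := by
    obtain ⟨A, hA⟩ := hS'ne
    obtain ⟨x, hx, hx0⟩ := C.exists_ne_zero j
    exact ⟨(A, (C.ip x)⁻¹ • x), hA, C.Sl_mem_of hx hx0⟩
  have htne : t.Nonempty := by
    obtain ⟨z, hz⟩ := hPne
    have := ht hz
    rw [mem_iUnion₂] at this
    obtain ⟨i, hi, _⟩ := this
    exact ⟨i, hi⟩
  set ε := t.inf' htne (fun z => εf z.1) with hε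
  have hε0 : 0 < ε := by
    obtain ⟨z, hz, hzeq⟩ := Finset.exists_mem_eq_inf' htne (fun z => εf z.1)
    rw [hε, hzeq]
    exact hεf0 z.1 z.2
  refine ⟨ε, hε0, ?_, ?_⟩
  · obtain ⟨z, hz, hzeq⟩ := Finset.exists_mem_eq_inf' htne (fun z => εf z.1)
    rw [hε, hzeq]
    exact hεf12 z.1 z.2
  · intro A hA ℓ' hgood x hx hx0
    -- normalize x
    have hipx := C.ip_pos hx hx0
    set xh := (C.ip x)⁻¹ • x with hxh
    have hxhSl : xh ∈ C.Sl j := C.Sl_mem_of hx hx0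
    have hTeq : C.T A xh = C.T A x := C.T_smul A x (by positivity)
    have hzP : (A, xh) ∈ P := ⟨hA, hxhSl⟩
    have := ht hzP
    rw [mem_iUnion₂] at this
    obtain ⟨i, hit, hiU⟩ := this
    obtain ⟨hiV, hic1, hic2⟩ := hiU
    have hGeq : G (A, xh) = C.T A x := by rw [← hTeq]; rfl
    rw [hGeq] at hic1 hic2
    set ℓi := ℓf i.1 with hℓi
    set εi := εf i.1 with hεi
    -- T A x ∈ K ℓi
    have hTK : C.T A x ∈ C.K ℓi := by
      have h1 : C.T A x = (C.T A x - εi • v ℓi) + εi • v ℓi := by ring_nf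
      rw [h1]
      exact C.add_mem (interior_subset hic1)
        (C.hsm ℓi εi (hεf0 i.1 i.2).le _ (interior_subset (hv ℓi).1))
    -- T A x ∈ interior K ℓ' and nonzero
    have hT' := hgood.T_mem C hx hx0
    have hT0 : C.T A x ≠ 0 := C.ne_zero_of_ip_one hT'.2
    -- hence ℓi = ℓ'
    have hℓeq : ℓi = ℓ' := by
      by_contra hne
      have := C.hdisj ℓi ℓ' hne
      have hmem : C.T A x ∈ C.K ℓi ∩ C.K ℓ' := ⟨hTK, interior_subset hT'.1⟩
      rw [this] at hmem
      exact hT0 hmem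
    rw [hℓeq] at hTK hic1 hic2
    have hεle : ε ≤ εi := Finset.inf'_le _ hit
    constructor
    · have h1 : C.T A x - ε • v ℓ' = (C.T A x - εi • v ℓ') + (εi - ε) • v ℓ' := by
        ext i'; simp; ring
      rw [h1]
      exact C.add_mem (interior_subset hic1)
        (C.hsm ℓ' _ (by linarith) _ (interior_subset (hv ℓ').1))
    · have h1 : v ℓ' - ε • C.T A x = (v ℓ' - εi • C.T A x) + (εi - ε) • C.T A x := by
        ext i'; simp; ring
      rw [h1]
      exact C.add_mem (interior_subset hic2) (C.hsm ℓ' _ (by linarith) _ hTK)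
variable {d m : ℕ} (C : Ctx d m)

/-- scale-free minorization package -/
lemma Ctx.scale_free {v : Fin m → Fin d → ℝ}
    {ε : ℝ} (hε0 : 0 < ε)
    {B : Matrix (Fin d) (Fin d) ℝ} {ℓ ℓ' : Fin m} (hgood : C.Good B ℓ ℓ')
    (hmin : ∀ x ∈ C.K ℓ, x ≠ 0 →
      (C.T B x - ε • v ℓ' ∈ C.K ℓ') ∧ (v ℓ' - ε • C.T B x ∈ C.K ℓ'))
    {s : ℝ} (hs : s = 1 ∨ s = -1)
    (hsgn : ∀ u ∈ C.K ℓ, u ≠ 0 → 0 < s * C.ip (B.mulVec u)) :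
    ∀ u ∈ C.K ℓ,
      (s • B.mulVec u - (ε * (s * C.ip (B.mulVec u))) • v ℓ' ∈ C.K ℓ') ∧
      ((s * C.ip (B.mulVec u)) • v ℓ' - ε • (s • B.mulVec u) ∈ C.K ℓ') ∧
      (0 ≤ s * C.ip (B.mulVec u)) ∧ (s • B.mulVec u ∈ C.K ℓ') := by
  intro u hu
  have hs2 : s * s = 1 := by rcases hs with rfl | rfl <;> norm_num
  have hsne : s ≠ 0 := by rcases hs with rfl | rfl <;> norm_num
  rcases eq_or_ne u 0 with rfl | hu0
  · have hB0 : B.mulVec (0 : Fin d → ℝ) = 0 := by simp [Matrix.mulVec_zero]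
    rw [hB0]
    simp only [smul_zero, Ctx.ip, zero_dotProduct, mul_zero, zero_smul, sub_zero, zero_sub]
    refine ⟨C.zero_mem ℓ', ?_, le_refl _, C.zero_mem ℓ'⟩
    simpa using C.zero_mem ℓ'
  · have hc := hsgn u hu hu0
    set c := s * C.ip (B.mulVec u) with hcdef
    have hTeq : s • B.mulVec u = c • C.T B u := by
      unfold Ctx.T
      rw [smul_smul, hcdef]
      congr 1
      have hipne : C.ip (B.mulVec u) ≠ 0 := by
        intro h; rw [hcdef, h, mul_zero] at hc; exact lt_irrefl _ hc
      field_simp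
      try ring
    have hm := hmin u hu hu0
    refine ⟨?_, ?_, hc.le, ?_⟩
    · have h1 : s • B.mulVec u - (ε * c) • v ℓ' = c • (C.T B u - ε • v ℓ') := by
        rw [hTeq]; ext i; simp; ring
      rw [h1]
      exact C.hsm ℓ' c hc.le _ hm.1
    · have h1 : c • v ℓ' - ε • (s • B.mulVec u) = c • (v ℓ' - ε • C.T B u) := by
        rw [hTeq]; ext i; simp; ring
      rw [h1]
      exact C.hsm ℓ' c hc.le _ hm.2
    · rw [hTeq]
      have := (hgood.T_mem C hu hu0).1
      exact C.hsm ℓ' c hc.le _ (interior_subset this)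

set_option maxHeartbeats 1000000 in
/-- The contraction step lemma. -/
lemma Ctx.step {v : Fin m → Fin d → ℝ}
    {ε : ℝ} (hε0 : 0 < ε) (hε1 : ε ≤ 1/2)
    {B : Matrix (Fin d) (Fin d) ℝ} {ℓ ℓ' : Fin m} (hgood : C.Good B ℓ ℓ')
    (hmin : ∀ x ∈ C.K ℓ, x ≠ 0 →
      (C.T B x - ε • v ℓ' ∈ C.K ℓ') ∧ (v ℓ' - ε • C.T B x ∈ C.K ℓ'))
    {x y : Fin d → ℝ} (hx : x ∈ C.K ℓ) (hy : y ∈ C.K ℓ)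
    (hipx : C.ip x = 1) (hipy : C.ip y = 1)
    {μ M : ℝ} (hμ : 0 < μ) (hwl : x - μ • y ∈ C.K ℓ) (hwu : M • y - x ∈ C.K ℓ) :
    ∃ μ' M' : ℝ, 0 < μ' ∧ (C.T B x - μ' • C.T B y ∈ C.K ℓ') ∧
      (M' • C.T B y - C.T B x ∈ C.K ℓ') ∧
      M' / μ' - 1 ≤ (1 - ε ^ 2) * (M / μ - 1) := by
  obtain ⟨s, hs, hsgn⟩ := C.sign_const hgood
  have hsf := C.scale_free hε0 hgood hmin hs hsgn
  have hx0 : x ≠ 0 := C.ne_zero_of_ip_one hipx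
  have hy0 : y ≠ 0 := C.ne_zero_of_ip_one hipy
  have hs2 : s * s = 1 := by rcases hs with rfl | rfl <;> norm_num
  have hsne : s ≠ 0 := by rcases hs with rfl | rfl <;> norm_num
  set a := s * C.ip (B.mulVec x) with ha
  set b := s * C.ip (B.mulVec y) with hb
  have ha0 : 0 < a := hsgn x hx hx0
  have hb0 : 0 < b := hsgn y hy hy0
  set u := x - μ • y with hu
  set vv := M • y - x with hvv
  set cu := s * C.ip (B.mulVec u) with hcu
  set cv := s * C.ip (B.mulVec vv) with hcv
  have hBu : B.mulVec u = B.mulVec x - μ • B.mulVec y := by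
    rw [hu, Matrix.mulVec_sub, Matrix.mulVec_smul]
  have hBv : B.mulVec vv = M • B.mulVec y - B.mulVec x := by
    rw [hvv, Matrix.mulVec_sub, Matrix.mulVec_smul]
  have hcu_eq : cu = a - μ * b := by
    rw [hcu, hBu, C.ip_sub, C.ip_smul, ha, hb]; ring
  have hcv_eq : cv = M * b - a := by
    rw [hcv, hBv, C.ip_sub, C.ip_smul, ha, hb]; ring
  have hcu0 : 0 ≤ cu := (hsf u hwl).2.2.1
  have hcv0 : 0 ≤ cv := (hsf vv hwu).2.2.1
  set μ' := (μ * b + ε ^ 2 * cu) / a with hμ'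
  set M' := (M * b - ε ^ 2 * cv) / a with hM'
  have hμ'0 : 0 < μ' := by
    apply div_pos _ ha0
    nlinarith
  -- key memberships
  have hTx : C.T B x = a⁻¹ • (s • B.mulVec x) := by
    unfold Ctx.T
    rw [smul_smul, ha]
    congr 1
    have : C.ip (B.mulVec x) ≠ 0 := by intro h; rw [ha, h, mul_zero] at ha0; exact lt_irrefl _ ha0
    field_simp; try ring
  have hTy : C.T B y = b⁻¹ • (s • B.mulVec y) := by
    unfold Ctx.T
    rw [smul_smul, hb]
    congr 1
    have : C.ip (B.mulVec y) ≠ 0 := by intro h; rw [hb, h, mul_zero] at hb0; exact lt_irrefl _ hb0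
    field_simp; try ring
  refine ⟨μ', M', hμ'0, ?_, ?_, ?_⟩
  · -- lower witness
    have hmem : (s • B.mulVec u - (ε * cu) • v ℓ') + (ε * cu / b) • (b • v ℓ' - ε • (s • B.mulVec y))
        ∈ C.K ℓ' := by
      apply C.add_mem (hsf u hwl).1
      apply C.hsm ℓ' _ (by positivity) _
      have h2 := (hsf y hy).2.1
      rw [← hb] at h2
      exact h2
    have hane : a ≠ 0 := ne_of_gt ha0
    have hbne : b ≠ 0 := ne_of_gt hb0
    have heq : C.T B x - μ' • C.T B y =
        a⁻¹ • ((s • B.mulVec u - (ε * cu) • v ℓ') +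
          (ε * cu / b) • (b • v ℓ' - ε • (s • B.mulVec y))) := by
      rw [hTx, hTy, hBu, hμ']
      ext i
      simp only [Pi.smul_apply, Pi.sub_apply, Pi.add_apply, smul_eq_mul]
      field_simp
      ring
    rw [heq]
    exact C.hsm ℓ' _ (by positivity) _ hmem
  · -- upper witness
    have hmem : (s • B.mulVec vv - (ε * cv) • v ℓ') + (ε * cv / b) • (b • v ℓ' - ε • (s • B.mulVec y))
        ∈ C.K ℓ' := by
      apply C.add_mem (hsf vv hwu).1
      apply C.hsm ℓ' _ (by positivity) _
      have h2 := (hsf y hy).2.1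
      rw [← hb] at h2
      exact h2
    have hane : a ≠ 0 := ne_of_gt ha0
    have hbne : b ≠ 0 := ne_of_gt hb0
    have heq : M' • C.T B y - C.T B x =
        a⁻¹ • ((s • B.mulVec vv - (ε * cv) • v ℓ') +
          (ε * cv / b) • (b • v ℓ' - ε • (s • B.mulVec y))) := by
      rw [hTx, hTy, hBv, hM']
      ext i
      simp only [Pi.smul_apply, Pi.sub_apply, Pi.add_apply, smul_eq_mul]
      field_simp
      ring
    rw [heq]
    exact C.hsm ℓ' _ (by positivity) _ hmem
  · -- ratio contraction
    have hMμ : μ ≤ M := by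
      have h1 : μ * b ≤ a := by nlinarith [hcu_eq, hcu0]
      have h2 : a ≤ M * b := by nlinarith [hcv_eq, hcv0]
      nlinarith
    have he1 : 0 < 1 - ε ^ 2 := by nlinarith
    have haμ' : a * μ' = μ * b + ε ^ 2 * cu := by rw [hμ']; field_simp
    have haM' : a * M' = M * b - ε ^ 2 * cv := by rw [hM']; field_simp
    have hsum : cu + cv = (M - μ) * b := by rw [hcu_eq, hcv_eq]; ring
    have hgoal1 : (M' - μ') * μ ≤ (1 - ε ^ 2) * (M - μ) * μ' := by
      have hD : μ * b ≤ a * μ' := by nlinarith [haμ']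
      have hdiff : a * (M' - μ') = (1 - ε ^ 2) * (M - μ) * b := by
        nlinarith [haμ', haM', hsum]
      have hnn : 0 ≤ (1 - ε ^ 2) * (M - μ) := by nlinarith
      have h6 : (1 - ε ^ 2) * (M - μ) * (μ * b) ≤ (1 - ε ^ 2) * (M - μ) * (a * μ') :=
        mul_le_mul_of_nonneg_left hD hnn
      have h5 : a * (M' - μ') * μ = (1 - ε ^ 2) * (M - μ) * b * μ := by rw [hdiff]
      have h7 : a * ((M' - μ') * μ) ≤ a * ((1 - ε ^ 2) * (M - μ) * μ') := by
        nlinarith [h5, h6]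
      exact le_of_mul_le_mul_left h7 ha0
    have h2 : M' / μ' - 1 = (M' - μ') / μ' := by
      rw [div_sub_one (ne_of_gt hμ'0)]
    have h3 : (1 - ε ^ 2) * (M / μ - 1) = ((1 - ε ^ 2) * (M - μ)) / μ := by
      field_simp
    rw [h2, h3, div_le_div_iff₀ hμ'0 hμ]
    linarith [hgoal1]

/-- The entry lemma. -/
lemma Ctx.entry {v : Fin m → Fin d → ℝ}
    {ε : ℝ} (hε0 : 0 < ε)
    {B : Matrix (Fin d) (Fin d) ℝ} {ℓ ℓ' : Fin m} (hgood : C.Good B ℓ ℓ')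
    (hmin : ∀ x ∈ C.K ℓ, x ≠ 0 →
      (C.T B x - ε • v ℓ' ∈ C.K ℓ') ∧ (v ℓ' - ε • C.T B x ∈ C.K ℓ'))
    {x y : Fin d → ℝ} (hx : x ∈ C.K ℓ) (hy : y ∈ C.K ℓ) (hx0 : x ≠ 0) (hy0 : y ≠ 0) :
    (C.T B x - (ε ^ 2) • C.T B y ∈ C.K ℓ') ∧ ((ε ^ 2)⁻¹ • C.T B y - C.T B x ∈ C.K ℓ') := by
  have hmx := hmin x hx hx0
  have hmy := hmin y hy hy0
  constructor
  · have heq : C.T B x - (ε ^ 2) • C.T B y =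
        (C.T B x - ε • v ℓ') + ε • (v ℓ' - ε • C.T B y) := by
      ext i; simp; ring
    rw [heq]
    exact C.add_mem hmx.1 (C.hsm ℓ' ε hε0.le _ hmy.2)
  · have heq : (ε ^ 2)⁻¹ • C.T B y - C.T B x =
        (ε ^ 2)⁻¹ • (C.T B y - ε • v ℓ') + ε⁻¹ • (v ℓ' - ε • C.T B x) := by
      ext i
      simp only [Pi.smul_apply, Pi.sub_apply, Pi.add_apply, smul_eq_mul]
      field_simp
      ring
    rw [heq]
    exact C.add_mem (C.hsm ℓ' _ (by positivity) _ hmy.1) (C.hsm ℓ' _ (by positivity) _ hmx.2)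
variable {d m : ℕ} (C : Ctx d m)

/-- distance from Hilbert-type witnesses -/
lemma Ctx.witness_dist {c₁ : ℝ} (hc₁ : 0 < c₁) (hc₁' : ∀ j, ∀ x ∈ C.K j, c₁ * ‖x‖ ≤ C.ip x)
    {ℓ : Fin m} {x y : Fin d → ℝ} (hx : x ∈ C.K ℓ) (hy : y ∈ C.K ℓ)
    (hipx : C.ip x = 1) (hipy : C.ip y = 1)
    {μ M : ℝ} (hμ : 0 < μ) (hwl : x - μ • y ∈ C.K ℓ) (hwu : M • y - x ∈ C.K ℓ) :
    ‖x - y‖ ≤ 2 / c₁ * (M / μ - 1) := by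
  have hμ1 : μ ≤ 1 := by
    have := C.ip_nonneg hwl
    rw [C.ip_sub, C.ip_smul, hipx, hipy] at this
    linarith
  have hM1 : 1 ≤ M := by
    have := C.ip_nonneg hwu
    rw [C.ip_sub, C.ip_smul, hipx, hipy] at this
    linarith
  have h1 : c₁ * ‖x - μ • y‖ ≤ 1 - μ := by
    have := hc₁' ℓ _ hwl
    rw [C.ip_sub, C.ip_smul, hipx, hipy] at this
    linarith
  have h2 : c₁ * ‖y‖ ≤ 1 := by
    have := hc₁' ℓ _ hy
    rw [hipy] at this
    linarith
  have h3 : ‖x - y‖ ≤ ‖x - μ • y‖ + (1 - μ) * ‖y‖ := by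
    have heq : x - y = (x - μ • y) + (μ - 1) • y := by ext i; simp; ring
    rw [heq]
    apply le_trans (norm_add_le _ _)
    rw [norm_smul, Real.norm_eq_abs, abs_of_nonpos (by linarith)]
    simp
  have hratio : 1 - μ ≤ M / μ - 1 := by
    rw [le_sub_iff_add_le, le_div_iff₀ hμ]
    nlinarith
  have hxn : ‖x - μ • y‖ ≤ (1 - μ) / c₁ := by
    rw [le_div_iff₀ hc₁]; nlinarith
  have hyn : ‖y‖ ≤ 1 / c₁ := by
    rw [le_div_iff₀ hc₁]; nlinarith
  have h4 : ‖x - y‖ ≤ 2 * (1 - μ) / c₁ := by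
    calc ‖x - y‖ ≤ ‖x - μ • y‖ + (1 - μ) * ‖y‖ := h3
    _ ≤ (1 - μ) / c₁ + (1 - μ) * (1 / c₁) := by
        apply add_le_add hxn
        apply mul_le_mul_of_nonneg_left hyn (by linarith)
    _ = 2 * (1 - μ) / c₁ := by ring
  calc ‖x - y‖ ≤ 2 * (1 - μ) / c₁ := h4
  _ = 2 / c₁ * (1 - μ) := by ring
  _ ≤ 2 / c₁ * (M / μ - 1) := mul_le_mul_of_nonneg_left hratio (by positivity)

/-- the square of a self-mapping matrix is positively self-mapping -/
lemma Ctx.good_sq {B : Matrix (Fin d) (Fin d) ℝ} {p : Fin m} (hg : C.Good B p p) :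
    ∀ u ∈ C.K p, u ≠ 0 → (B * B).mulVec u ∈ interior (C.K p) := by
  obtain ⟨s, hs, hsgn⟩ := C.sign_const hg
  intro u hu hu0
  have hrw : (B * B).mulVec u = B.mulVec (B.mulVec u) := (Matrix.mulVec_mulVec _ _ _).symm
  rw [hrw]
  have h1 := hg u hu hu0
  have hip1 := hsgn u hu hu0
  rcases hs with rfl | rfl
  · -- s = 1 : B.mulVec u ∈ interior K p
    simp only [one_mul] at hip1
    have hBu : B.mulVec u ∈ interior (C.K p) := by
      rcases h1 with h | h
      · exact h
      · exfalso
        have := C.ip_pos (interior_subset h) (C.interior_ne_zero h)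
        rw [show (-B.mulVec u) = (-1 : ℝ) • B.mulVec u by ext i; simp, C.ip_smul] at this
        linarith
    have h2 := hg _ (interior_subset hBu) (C.interior_ne_zero hBu)
    have hip2 := hsgn _ (interior_subset hBu) (C.interior_ne_zero hBu)
    simp only [one_mul] at hip2
    rcases h2 with h | h
    · exact h
    · exfalso
      have := C.ip_pos (interior_subset h) (C.interior_ne_zero h)
      rw [show (-B.mulVec (B.mulVec u)) = (-1 : ℝ) • B.mulVec (B.mulVec u) by ext i; simp,
        C.ip_smul] at this
      linarith
  · -- s = -1 : -B.mulVec u ∈ interior K p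
    have hip1' : C.ip (B.mulVec u) < 0 := by nlinarith
    have hBu : -B.mulVec u ∈ interior (C.K p) := by
      rcases h1 with h | h
      · exfalso
        have := C.ip_pos (interior_subset h) (C.interior_ne_zero h)
        linarith
      · exact h
    have h2 := hg _ (interior_subset hBu) (C.interior_ne_zero hBu)
    have hip2 := hsgn _ (interior_subset hBu) (C.interior_ne_zero hBu)
    have hmv : B.mulVec (-B.mulVec u) = - B.mulVec (B.mulVec u) := by
      rw [Matrix.mulVec_neg]
    rw [hmv] at h2 hip2
    have hip2' : 0 < C.ip (B.mulVec (B.mulVec u)) := by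
      rw [show C.ip (-B.mulVec (B.mulVec u)) = - C.ip (B.mulVec (B.mulVec u)) by
        rw [show (-B.mulVec (B.mulVec u)) = (-1 : ℝ) • B.mulVec (B.mulVec u) by ext i; simp,
          C.ip_smul]; ring] at hip2
      nlinarith
    rcases h2 with h | h
    · exfalso
      have := C.ip_pos (interior_subset h) (C.interior_ne_zero h)
      rw [show C.ip (-B.mulVec (B.mulVec u)) = - C.ip (B.mulVec (B.mulVec u)) by
        rw [show (-B.mulVec (B.mulVec u)) = (-1 : ℝ) • B.mulVec (B.mulVec u) by ext i; simp,
          C.ip_smul]; ring] at this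
      linarith
    · rw [neg_neg] at h
      exact h

/-- iterates of the normalized map stay in the cone -/
lemma Ctx.iter_mem {B : Matrix (Fin d) (Fin d) ℝ} {p : Fin m} (hgood : C.Good B p p)
    {x : Fin d → ℝ} (hx : x ∈ C.K p) (hx0 : x ≠ 0) :
    ∀ n : ℕ, 1 ≤ n → (C.T B)^[n] x ∈ interior (C.K p) ∧ C.ip ((C.T B)^[n] x) = 1 := by
  intro n hn
  induction n with
  | zero => omega
  | succ k ih =>
    rcases Nat.eq_or_lt_of_le hn with h | h
    · have h0 : k = 0 := by omega
      subst h0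
      exact hgood.T_mem C hx hx0
    · have hk : 1 ≤ k := by omega
      obtain ⟨h1, h2⟩ := ih hk
      rw [Function.iterate_succ_apply']
      exact hgood.T_mem C (interior_subset h1) (C.ne_zero_of_ip_one h2)

/-- iterated pair contraction for a single matrix -/
lemma Ctx.pair_contract {v : Fin m → Fin d → ℝ}
    {ε : ℝ} (hε0 : 0 < ε) (hε1 : ε ≤ 1/2)
    {B : Matrix (Fin d) (Fin d) ℝ} {p : Fin m} (hgood : C.Good B p p)
    (hmin : ∀ x ∈ C.K p, x ≠ 0 →
      (C.T B x - ε • v p ∈ C.K p) ∧ (v p - ε • C.T B x ∈ C.K p))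
    {x y : Fin d → ℝ} (hx : x ∈ C.K p) (hy : y ∈ C.K p) (hx0 : x ≠ 0) (hy0 : y ≠ 0) :
    ∀ n : ℕ, ∃ μ M : ℝ, 0 < μ ∧
      ((C.T B)^[n+1] x - μ • (C.T B)^[n+1] y ∈ C.K p) ∧
      (M • (C.T B)^[n+1] y - (C.T B)^[n+1] x ∈ C.K p) ∧
      M / μ - 1 ≤ ((ε^2)⁻¹ / ε^2 - 1) * (1 - ε^2)^n := by
  intro n
  induction n with
  | zero =>
    obtain ⟨h1, h2⟩ := C.entry hε0 hgood hmin hx hy hx0 hy0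
    refine ⟨ε^2, (ε^2)⁻¹, by positivity, ?_, ?_, by norm_num⟩
    · simpa only [zero_add, Function.iterate_one] using h1
    · simpa only [zero_add, Function.iterate_one] using h2
  | succ k ih =>
    obtain ⟨μ, M, hμ, hwl, hwu, hrat⟩ := ih
    have hmx := C.iter_mem hgood hx hx0 (k+1) (by omega)
    have hmy := C.iter_mem hgood hy hy0 (k+1) (by omega)
    obtain ⟨μ', M', hμ', hwl', hwu', hrat'⟩ :=
      C.step hε0 hε1 hgood hmin (interior_subset hmx.1) (interior_subset hmy.1)
        hmx.2 hmy.2 hμ hwl hwu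
    refine ⟨μ', M', hμ', ?_, ?_, ?_⟩
    · rw [show (C.T B)^[k+1+1] x = C.T B ((C.T B)^[k+1] x) from Function.iterate_succ_apply' _ _ _,
        show (C.T B)^[k+1+1] y = C.T B ((C.T B)^[k+1] y) from Function.iterate_succ_apply' _ _ _]
      exact hwl'
    · rw [show (C.T B)^[k+1+1] x = C.T B ((C.T B)^[k+1] x) from Function.iterate_succ_apply' _ _ _,
        show (C.T B)^[k+1+1] y = C.T B ((C.T B)^[k+1] y) from Function.iterate_succ_apply' _ _ _]
      exact hwu'
    · calc M' / μ' - 1 ≤ (1 - ε^2) * (M / μ - 1) := hrat'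
      _ ≤ (1 - ε^2) * (((ε^2)⁻¹ / ε^2 - 1) * (1 - ε^2)^k) := by
          apply mul_le_mul_of_nonneg_left hrat (by nlinarith)
      _ = ((ε^2)⁻¹ / ε^2 - 1) * (1 - ε^2)^(k+1) := by ring
variable {d m : ℕ} (C : Ctx d m)

lemma Ctx.dist_iter {c₁ : ℝ} (hc₁ : 0 < c₁) (hc₁' : ∀ j, ∀ x ∈ C.K j, c₁ * ‖x‖ ≤ C.ip x)
    {v : Fin m → Fin d → ℝ} {ε : ℝ} (hε0 : 0 < ε) (hε1 : ε ≤ 1/2)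
    {B : Matrix (Fin d) (Fin d) ℝ} {p : Fin m} (hgood : C.Good B p p)
    (hmin : ∀ x ∈ C.K p, x ≠ 0 →
      (C.T B x - ε • v p ∈ C.K p) ∧ (v p - ε • C.T B x ∈ C.K p))
    {x y : Fin d → ℝ} (hx : x ∈ C.K p) (hy : y ∈ C.K p) (hx0 : x ≠ 0) (hy0 : y ≠ 0) :
    ∀ n : ℕ, ‖(C.T B)^[n+1] x - (C.T B)^[n+1] y‖ ≤
      (2/c₁ * ((ε^2)⁻¹/ε^2 - 1)) * (1-ε^2)^n := by
  intro n
  obtain ⟨μ, M, hμ, hwl, hwu, hrat⟩ := C.pair_contract hε0 hε1 hgood hmin hx hy hx0 hy0 n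
  have hmx := C.iter_mem hgood hx hx0 (n+1) (by omega)
  have hmy := C.iter_mem hgood hy hy0 (n+1) (by omega)
  have hd := C.witness_dist hc₁ hc₁' (interior_subset hmx.1) (interior_subset hmy.1)
    hmx.2 hmy.2 hμ hwl hwu
  calc ‖(C.T B)^[n+1] x - (C.T B)^[n+1] y‖ ≤ 2/c₁ * (M/μ - 1) := hd
  _ ≤ 2/c₁ * (((ε^2)⁻¹/ε^2 - 1) * (1-ε^2)^n) :=
      mul_le_mul_of_nonneg_left hrat (by positivity)
  _ = (2/c₁ * ((ε^2)⁻¹/ε^2 - 1)) * (1-ε^2)^n := by ring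

set_option maxHeartbeats 2000000 in
lemma Ctx.fixed_point {v : Fin m → Fin d → ℝ}
    (hv : ∀ j, v j ∈ interior (C.K j) ∧ C.ip (v j) = 1)
    {c₁ : ℝ} (hc₁ : 0 < c₁) (hc₁' : ∀ j, ∀ x ∈ C.K j, c₁ * ‖x‖ ≤ C.ip x)
    {ε : ℝ} (hε0 : 0 < ε) (hε1 : ε ≤ 1/2)
    {B : Matrix (Fin d) (Fin d) ℝ} {p : Fin m} (hgood : C.Good B p p)
    (hmin : ∀ x ∈ C.K p, x ≠ 0 →
      (C.T B x - ε • v p ∈ C.K p) ∧ (v p - ε • C.T B x ∈ C.K p)) :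
    ∃ xs, xs ∈ interior (C.K p) ∧ C.ip xs = 1 ∧ C.T B xs = xs ∧
      ∀ z ∈ C.K p, C.ip z = 1 → C.T B z = z → z = xs := by
  have hlam0 : (0:ℝ) ≤ 1 - ε^2 := by nlinarith
  have hlam1 : 1 - ε^2 < 1 := by nlinarith
  set X : ℕ → (Fin d → ℝ) := fun t => (C.T B)^[t] (v p) with hX
  have hv0 : v p ∈ C.K p := interior_subset (hv p).1
  have hvne : v p ≠ 0 := C.ne_zero_of_ip_one (hv p).2
  have hXmem : ∀ t, 1 ≤ t → X t ∈ interior (C.K p) ∧ C.ip (X t) = 1 :=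
    fun t ht => C.iter_mem hgood hv0 hvne t ht
  have hTv : C.T B (v p) ∈ C.K p ∧ C.T B (v p) ≠ 0 := by
    have h := hgood.T_mem C hv0 hvne
    exact ⟨interior_subset h.1, C.ne_zero_of_ip_one h.2⟩
  have hcauchy : CauchySeq (fun t => X (t+1)) := by
    apply cauchySeq_of_le_geometric (1-ε^2) (2/c₁*((ε^2)⁻¹/ε^2-1)) hlam1
    intro n
    rw [dist_eq_norm]
    have h1 := C.dist_iter hc₁ hc₁' hε0 hε1 hgood hmin hv0 hTv.1 hvne hTv.2 n
    have h2 : (C.T B)^[n+1] (C.T B (v p)) = X (n+1+1) := by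
      rw [hX, ← Function.iterate_succ_apply]
    rw [h2] at h1
    exact h1
  obtain ⟨xs, hxs⟩ := cauchySeq_tendsto_of_complete hcauchy
  have hmemK : xs ∈ C.K p :=
    (C.hcl p).mem_of_tendsto hxs
      (Filter.Eventually.of_forall fun t => interior_subset (hXmem (t+1) (by omega)).1)
  have hip1 : C.ip xs = 1 := by
    have h2 : Filter.Tendsto (fun t => C.ip (X (t+1))) Filter.atTop (nhds (C.ip xs)) :=
      (C.ip_continuous.tendsto xs).comp hxs
    have h3 : (fun t => C.ip (X (t+1))) = fun _ => (1:ℝ) :=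
      funext fun t => (hXmem (t+1) (by omega)).2
    rw [h3] at h2
    exact tendsto_nhds_unique h2 tendsto_const_nhds
  have hx0 : xs ≠ 0 := C.ne_zero_of_ip_one hip1
  have hipne : C.ip (B.mulVec xs) ≠ 0 := hgood.ip_ne C hmemK hx0
  have hBc : Continuous fun z : Fin d → ℝ => B.mulVec z :=
    mulVec_pair_continuous.comp (continuous_const.prodMk continuous_id)
  have hTc : ContinuousAt (C.T B) xs := by
    apply ContinuousAt.fun_smul
    · exact ((C.ip_continuous.comp hBc).continuousAt).inv₀ hipne
    · exact hBc.continuousAt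
  have hfix : C.T B xs = xs := by
    have h4 : Filter.Tendsto (fun t => C.T B (X (t+1))) Filter.atTop (nhds (C.T B xs)) :=
      hTc.tendsto.comp hxs
    have h5 : (fun t => C.T B (X (t+1))) = fun t => X (t+1+1) :=
      funext fun t => (Function.iterate_succ_apply' _ _ _).symm
    rw [h5] at h4
    have h6 : Filter.Tendsto (fun t => X (t+1+1)) Filter.atTop (nhds xs) := by
      have h7 := hxs.comp (Filter.tendsto_add_atTop_nat 1)
      exact h7
    exact tendsto_nhds_unique h4 h6
  have hxsint : xs ∈ interior (C.K p) := by
    rw [← hfix]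
    exact (hgood.T_mem C hmemK hx0).1
  refine ⟨xs, hxsint, hip1, hfix, ?_⟩
  intro z hz hz1 hzfix
  have hz0 : z ≠ 0 := C.ne_zero_of_ip_one hz1
  have hb : ∀ n : ℕ, ‖z - xs‖ ≤ (2/c₁*((ε^2)⁻¹/ε^2-1)) * (1-ε^2)^n := by
    intro n
    have h1 := C.dist_iter hc₁ hc₁' hε0 hε1 hgood hmin hz hmemK hz0 hx0 n
    rwa [Function.iterate_fixed hzfix, Function.iterate_fixed hfix] at h1
  have htend : Filter.Tendsto (fun n : ℕ => (2/c₁*((ε^2)⁻¹/ε^2-1)) * (1-ε^2)^n)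
      Filter.atTop (nhds 0) := by
    have := (tendsto_pow_atTop_nhds_zero_of_lt_one hlam0 hlam1).const_mul (2/c₁*((ε^2)⁻¹/ε^2-1))
    simpa using this
  have hle : ‖z - xs‖ ≤ 0 := ge_of_tendsto htend (Filter.Eventually.of_forall hb)
  have : z - xs = 0 := by
    have := norm_le_zero_iff.mp hle
    exact this
  exact sub_eq_zero.mp this

lemma Ctx.dominate {c₁ : ℝ} (hc₁ : 0 < c₁) (hc₁' : ∀ j, ∀ x ∈ C.K j, c₁ * ‖x‖ ≤ C.ip x)
    {B2 : Matrix (Fin d) (Fin d) ℝ} {p : Fin m}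
    (hmapK : ∀ z ∈ C.K p, B2.mulVec z ∈ C.K p)
    {xs ys : Fin d → ℝ} (hxsint : xs ∈ interior (C.K p)) (hips : C.ip xs = 1)
    (hys0 : ys ≠ 0)
    {lp lq : ℝ} (hlp : 0 < lp) (hlt : lp < lq)
    (he1 : B2.mulVec xs = lp • xs) (he2 : B2.mulVec ys = lq • ys) : False := by
  obtain ⟨r, hr, hball⟩ := Metric.isOpen_iff.1 isOpen_interior xs hxsint
  have hKball : ∀ z : Fin d → ℝ, ‖z - xs‖ < r → z ∈ C.K p := by
    intro z hzr
    apply interior_subset; apply hball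
    rw [Metric.mem_ball, dist_eq_norm]; exact hzr
  set δ := r / (2 * (‖ys‖ + 1)) with hδ
  have hδ0 : 0 < δ := by positivity
  set k := xs - δ • ys with hk
  have hkK : k ∈ C.K p := by
    apply hKball
    rw [show k - xs = -(δ • ys) by rw [hk]; ring_nf, norm_neg, norm_smul, Real.norm_eq_abs,
      abs_of_pos hδ0]
    have hne : ‖ys‖ + (1:ℝ) ≠ 0 := by positivity
    have hstep : δ * (‖ys‖ + 1) = r / 2 := by rw [hδ]; field_simp
    calc δ * ‖ys‖ ≤ δ * (‖ys‖ + 1) := by nlinarith [norm_nonneg ys]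
    _ = r / 2 := hstep
    _ < r := by linarith
  -- domination constant
  set c0 := r / (2 * (‖k‖ + 1)) with hc0
  have hc00 : 0 < c0 := by positivity
  have hxk : xs - c0 • k ∈ C.K p := by
    apply hKball
    rw [show xs - c0 • k - xs = -(c0 • k) by ring_nf, norm_neg, norm_smul, Real.norm_eq_abs,
      abs_of_pos hc00]
    have hne : ‖k‖ + (1:ℝ) ≠ 0 := by positivity
    have hstep : c0 * (‖k‖ + 1) = r / 2 := by rw [hc0]; field_simp
    calc c0 * ‖k‖ ≤ c0 * (‖k‖ + 1) := by nlinarith [norm_nonneg k]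
    _ = r / 2 := hstep
    _ < r := by linarith
  set c := c0⁻¹ with hc
  have hcpos : 0 < c := by positivity
  have hcxk : c • xs - k ∈ C.K p := by
    have := C.hsm p c hcpos.le _ hxk
    have heq : c • (xs - c0 • k) = c • xs - k := by
      ext i; simp [hc]; field_simp
    rwa [heq] at this
  have hpow : ∀ (n:ℕ) (u : Fin d → ℝ), (B2^(n+1)).mulVec u = B2.mulVec ((B2^n).mulVec u) := by
    intro n u
    rw [pow_succ', Matrix.mulVec_mulVec]
  have h1 : ∀ n : ℕ, (B2^n).mulVec xs = (lp^n) • xs := by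
    intro n
    induction n with
    | zero => simp [Matrix.one_mulVec]
    | succ t ih =>
      rw [hpow, ih, Matrix.mulVec_smul, he1, smul_smul, pow_succ']
      congr 1; ring
  have h2 : ∀ n : ℕ, (B2^n).mulVec ys = (lq^n) • ys := by
    intro n
    induction n with
    | zero => simp [Matrix.one_mulVec]
    | succ t ih =>
      rw [hpow, ih, Matrix.mulVec_smul, he2, smul_smul, pow_succ']
      congr 1; ring
  have h3 : ∀ n : ℕ, (B2^n).mulVec k ∈ C.K p := by
    intro n
    induction n with
    | zero => simpa [Matrix.one_mulVec] using hkK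
    | succ t ih => rw [hpow]; exact hmapK _ ih
  have h4 : ∀ n : ℕ, (c * lp^n) • xs - (B2^n).mulVec k ∈ C.K p := by
    intro n
    induction n with
    | zero => simpa [Matrix.one_mulVec] using hcxk
    | succ t ih =>
      have := hmapK _ ih
      have heq : B2.mulVec ((c * lp^t) • xs - (B2^t).mulVec k) =
          (c * lp^(t+1)) • xs - (B2^(t+1)).mulVec k := by
        rw [Matrix.mulVec_sub, Matrix.mulVec_smul, he1, hpow, smul_smul]
        congr 2
        rw [pow_succ]; ring
      rwa [heq] at this
  have h5 : ∀ n : ℕ, C.ip ((B2^n).mulVec k) ≤ c * lp^n := by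
    intro n
    have := C.ip_nonneg (h4 n)
    rw [C.ip_sub, C.ip_smul, hips] at this
    linarith
  have h6 : ∀ n : ℕ, ‖(B2^n).mulVec k‖ ≤ c₁⁻¹ * (c * lp^n) := by
    intro n
    have ha := hc₁' p _ (h3 n)
    have hb := h5 n
    rw [le_inv_mul_iff₀ hc₁]
    calc c₁ * ‖(B2^n).mulVec k‖ ≤ C.ip ((B2^n).mulVec k) := ha
    _ ≤ c * lp^n := hb
  have hkey : ∀ n : ℕ, (δ * lq^n) • ys = (lp^n) • xs - (B2^n).mulVec k := by
    intro n
    rw [show k = xs - δ • ys from rfl, Matrix.mulVec_sub, Matrix.mulVec_smul, h1, h2]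
    ext i; simp; ring
  set CC := ‖xs‖ + c₁⁻¹ * c with hCC
  have hlq0 : 0 < lq := lt_trans hlp hlt
  have hbound : ∀ n : ℕ, δ * ‖ys‖ * lq^n ≤ CC * lp^n := by
    intro n
    have hn1 : ‖(δ * lq^n) • ys‖ = δ * lq^n * ‖ys‖ := by
      rw [norm_smul, Real.norm_eq_abs, abs_of_pos (mul_pos hδ0 (pow_pos hlq0 n))]
    have hn2 : ‖(lp^n) • xs - (B2^n).mulVec k‖ ≤ lp^n * ‖xs‖ + c₁⁻¹ * (c * lp^n) := by
      apply le_trans (norm_sub_le _ _)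
      apply add_le_add _ (h6 n)
      rw [norm_smul, Real.norm_eq_abs, abs_of_pos (pow_pos hlp n)]
    have := hkey n
    calc δ * ‖ys‖ * lq^n = ‖(δ * lq^n) • ys‖ := by rw [hn1]; ring
    _ = ‖(lp^n) • xs - (B2^n).mulVec k‖ := by rw [this]
    _ ≤ lp^n * ‖xs‖ + c₁⁻¹ * (c * lp^n) := hn2
    _ = CC * lp^n := by rw [hCC]; ring
  have hratio : ∀ n : ℕ, δ * ‖ys‖ ≤ CC * (lp/lq)^n := by
    intro n
    have hlqn : 0 < lq^n := pow_pos hlq0 n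
    rw [div_pow, ← mul_div_assoc, le_div_iff₀ hlqn]
    exact hbound n
  have htend : Filter.Tendsto (fun n : ℕ => CC * (lp/lq)^n) Filter.atTop (nhds 0) := by
    have h01 : 0 ≤ lp/lq := by positivity
    have h02 : lp/lq < 1 := by rw [div_lt_one hlq0]; exact hlt
    have := (tendsto_pow_atTop_nhds_zero_of_lt_one h01 h02).const_mul CC
    simpa using this
  have hle : δ * ‖ys‖ ≤ 0 := ge_of_tendsto htend (Filter.Eventually.of_forall hratio)
  have : 0 < δ * ‖ys‖ := by
    have := norm_pos_iff.2 hys0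
    positivity
  linarith
variable {d m : ℕ} (C : Ctx d m)

set_option maxHeartbeats 1000000 in
/-- no matrix can strictly fix two distinct cones -/
lemma Ctx.no_two_fixed {v : Fin m → Fin d → ℝ}
    (hv : ∀ j, v j ∈ interior (C.K j) ∧ C.ip (v j) = 1)
    {c₁ : ℝ} (hc₁ : 0 < c₁) (hc₁' : ∀ j, ∀ x ∈ C.K j, c₁ * ‖x‖ ≤ C.ip x)
    {B : Matrix (Fin d) (Fin d) ℝ} {p q : Fin m} (hpq : p ≠ q)
    (hgp : C.Good B p p) (hgq : C.Good B q q) : False := by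
  set B2 := B * B with hB2
  have hsqp := C.good_sq hgp
  have hsqq := C.good_sq hgq
  have hg2p : C.Good B2 p p := fun u hu hu0 => Or.inl (hsqp u hu hu0)
  have hg2q : C.Good B2 q q := fun u hu hu0 => Or.inl (hsqq u hu hu0)
  have hmapKp : ∀ z ∈ C.K p, B2.mulVec z ∈ C.K p := by
    intro z hz
    rcases eq_or_ne z 0 with rfl | hz0
    · rw [Matrix.mulVec_zero]; exact C.zero_mem p
    · exact interior_subset (hsqp z hz hz0)
  have hmapKq : ∀ z ∈ C.K q, B2.mulVec z ∈ C.K q := by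
    intro z hz
    rcases eq_or_ne z 0 with rfl | hz0
    · rw [Matrix.mulVec_zero]; exact C.zero_mem q
    · exact interior_subset (hsqq z hz hz0)
  obtain ⟨εp, hεp0, hεp1, hminp'⟩ := C.minorization v hv {B2} isCompact_singleton p
    (fun A hA => by rw [Set.mem_singleton_iff] at hA; subst hA; exact ⟨p, hg2p⟩)
  obtain ⟨εq, hεq0, hεq1, hminq'⟩ := C.minorization v hv {B2} isCompact_singleton q
    (fun A hA => by rw [Set.mem_singleton_iff] at hA; subst hA; exact ⟨q, hg2q⟩)
  have hminp : ∀ x ∈ C.K p, x ≠ 0 →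
      (C.T B2 x - εp • v p ∈ C.K p) ∧ (v p - εp • C.T B2 x ∈ C.K p) :=
    fun x hx hx0 => hminp' B2 rfl p hg2p x hx hx0
  have hminq : ∀ x ∈ C.K q, x ≠ 0 →
      (C.T B2 x - εq • v q ∈ C.K q) ∧ (v q - εq • C.T B2 x ∈ C.K q) :=
    fun x hx hx0 => hminq' B2 rfl q hg2q x hx hx0
  obtain ⟨xs, hxsint, hxsip, hxsfix, hxsuniq⟩ :=
    C.fixed_point hv hc₁ hc₁' hεp0 hεp1 hg2p hminp
  obtain ⟨ys, hysint, hysip, hysfix, _⟩ :=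
    C.fixed_point hv hc₁ hc₁' hεq0 hεq1 hg2q hminq
  have hxs0 : xs ≠ 0 := C.ne_zero_of_ip_one hxsip
  have hys0 : ys ≠ 0 := C.ne_zero_of_ip_one hysip
  set lp := C.ip (B2.mulVec xs) with hlp
  set lq := C.ip (B2.mulVec ys) with hlq
  have hlp0 : 0 < lp := by
    have := hsqp xs (interior_subset hxsint) hxs0
    exact C.ip_pos (interior_subset this) (C.interior_ne_zero this)
  have hlq0 : 0 < lq := by
    have := hsqq ys (interior_subset hysint) hys0
    exact C.ip_pos (interior_subset this) (C.interior_ne_zero this)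
  have he1 : B2.mulVec xs = lp • xs := by
    have h := hxsfix
    unfold Ctx.T at h
    rw [← hlp] at h
    calc B2.mulVec xs = lp • (lp⁻¹ • B2.mulVec xs) := by
          rw [smul_smul, mul_inv_cancel₀ (ne_of_gt hlp0), one_smul]
    _ = lp • xs := by rw [h]
  have he2 : B2.mulVec ys = lq • ys := by
    have h := hysfix
    unfold Ctx.T at h
    rw [← hlq] at h
    calc B2.mulVec ys = lq • (lq⁻¹ • B2.mulVec ys) := by
          rw [smul_smul, mul_inv_cancel₀ (ne_of_gt hlq0), one_smul]
    _ = lq • ys := by rw [h]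
  have hdisjfact : ∀ z : Fin d → ℝ, z ≠ 0 → z ∈ C.K p → z ∈ C.K q → False := by
    intro z hz h1 h2
    have hmem : z ∈ C.K p ∩ C.K q := ⟨h1, h2⟩
    rw [C.hdisj p q hpq] at hmem
    exact hz hmem
  rcases lt_trichotomy lp lq with h | h | h
  · exact C.dominate hc₁ hc₁' hmapKp hxsint hxsip hys0 hlp0 h he1 he2
  · -- equal eigenvalues
    obtain ⟨r, hr, hball⟩ := Metric.isOpen_iff.1 isOpen_interior xs hxsint
    have hKball : ∀ z : Fin d → ℝ, ‖z - xs‖ < r → z ∈ C.K p := by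
      intro z hzr
      apply interior_subset; apply hball
      rw [Metric.mem_ball, dist_eq_norm]; exact hzr
    set δ := r / (2 * (‖ys‖ + 1)) with hδ
    have hδ0 : 0 < δ := by positivity
    set k := xs - δ • ys with hk
    have hkK : k ∈ C.K p := by
      apply hKball
      rw [show k - xs = -(δ • ys) by rw [hk]; ring_nf, norm_neg, norm_smul, Real.norm_eq_abs,
        abs_of_pos hδ0]
      have hne : ‖ys‖ + (1:ℝ) ≠ 0 := by positivity
      have hstep : δ * (‖ys‖ + 1) = r / 2 := by rw [hδ]; field_simp
      calc δ * ‖ys‖ ≤ δ * (‖ys‖ + 1) := by nlinarith [norm_nonneg ys]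
      _ = r / 2 := hstep
      _ < r := by linarith
    have hk0 : k ≠ 0 := by
      intro hk0
      have hxseq : xs = δ • ys := by
        have h9 : xs - δ • ys = (0 : Fin d → ℝ) := hk0
        ext i
        have h10 := congrFun h9 i
        simp only [Pi.sub_apply, Pi.smul_apply, Pi.zero_apply, smul_eq_mul] at h10
        simp only [Pi.smul_apply, smul_eq_mul]
        linarith
      apply hdisjfact xs hxs0 (interior_subset hxsint)
      rw [hxseq]
      exact C.hsm q δ hδ0.le ys (interior_subset hysint)
    have hkeig : B2.mulVec k = lp • k := by
      rw [hk, Matrix.mulVec_sub, Matrix.mulVec_smul, he1, he2, ← h]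
      ext i; simp; ring
    have hipk : 0 < C.ip k := C.ip_pos hkK hk0
    set khat := (C.ip k)⁻¹ • k with hkhat
    have hkhatK : khat ∈ C.K p := C.hsm p _ (by positivity) k hkK
    have hkhatip : C.ip khat = 1 := by rw [hkhat, C.ip_smul]; field_simp
    have hkhatfix : C.T B2 khat = khat := by
      rw [hkhat, C.T_smul B2 k (by positivity)]
      unfold Ctx.T
      rw [hkeig, C.ip_smul, smul_smul]
      congr 1
      have hipkne : C.ip k ≠ 0 := ne_of_gt hipk
      have hlpne : lp ≠ 0 := ne_of_gt hlp0
      field_simp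
    have hkeq : khat = xs := hxsuniq khat hkhatK hkhatip hkhatfix
    -- k = (ip k) • xs
    have hkx : k = (C.ip k) • xs := by
      rw [← hkeq, hkhat, smul_smul, mul_inv_cancel₀ (ne_of_gt hipk), one_smul]
    have hipkval : C.ip k = 1 - δ := by
      rw [hk, C.ip_sub, C.ip_smul, hxsip, hysip]; ring
    have h1 : xs - δ • ys = (1 - δ) • xs := by rw [← hipkval, ← hkx]
    have hyseq : δ • ys = δ • xs := by
      have h5 : δ • ys = xs - (xs - δ • ys) := by ext i; simp
      rw [h5, h1]; ext i; simp; ring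
    have hysxs : ys = xs := smul_right_injective (Fin d → ℝ) (ne_of_gt hδ0) hyseq
    exact hdisjfact xs hxs0 (interior_subset hxsint) (hysxs ▸ interior_subset hysint)
  · exact C.dominate hc₁ hc₁' hmapKq hysint hysip hxs0 hlq0 h he2 he1
variable {d m : ℕ} (C : Ctx d m)

lemma take_drop_split {α : Type*} (L : List α) (t t' : ℕ) (h : t ≤ t') :
    L.take t ++ (L.take t').drop t = L.take t' := by
  have h1 : (L.take t').take t = L.take t := by
    rw [List.take_take, min_eq_left h]
  rw [← h1]
  exact List.take_append_drop t (L.take t')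

lemma prefix_split {M : Type*} [Monoid M] (L : List M) (t t' : ℕ) (h : t ≤ t') :
    (L.take t').reverse.prod = ((L.take t').drop t).reverse.prod * (L.take t).reverse.prod := by
  conv_lhs => rw [← take_drop_split L t t' h]
  rw [List.reverse_append, List.prod_append]

lemma prefix_take_succ {M : Type*} [Monoid M] {n : ℕ} (A : Fin n → M) (t : ℕ) (ht : t < n) :
    ((List.ofFn A).take (t+1)).reverse.prod =
      A ⟨t, ht⟩ * ((List.ofFn A).take t).reverse.prod := by
  have h1 : (List.ofFn A).take (t+1) = (List.ofFn A).take t ++ [A ⟨t, ht⟩] := by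
    rw [List.take_succ]
    congr 1
    have : (List.ofFn A)[t]? = some (A ⟨t, ht⟩) := by
      rw [List.getElem?_eq_getElem (by simpa using ht)]
      simp
    rw [this]
    rfl
  rw [h1, List.reverse_append, List.prod_append]
  simp

lemma mid_singleton {M : Type*} [Monoid M] {n : ℕ} (A : Fin n → M) (t : ℕ) (ht : t < n) :
    (((List.ofFn A).take (t+1)).drop t).reverse.prod = A ⟨t, ht⟩ := by
  have h1 : (List.ofFn A).take (t+1) = (List.ofFn A).take t ++ [A ⟨t, ht⟩] := by
    rw [List.take_succ]
    congr 1
    have : (List.ofFn A)[t]? = some (A ⟨t, ht⟩) := by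
      rw [List.getElem?_eq_getElem (by simpa using ht)]
      simp
    rw [this]
    rfl
  have h2 : ((List.ofFn A).take t).length = t := by
    rw [List.length_take, List.length_ofFn]
    omega
  rw [h1, List.drop_left' h2]
  simp

lemma Ctx.target_eq {y : Fin d → ℝ} (hy0 : y ≠ 0) {ℓ ℓ' : Fin m}
    (h1 : y ∈ interior (C.K ℓ) ∨ -y ∈ interior (C.K ℓ))
    (h2 : y ∈ interior (C.K ℓ') ∨ -y ∈ interior (C.K ℓ')) : ℓ = ℓ' := by
  by_contra hne
  have key : ∀ z : Fin d → ℝ, z ≠ 0 → z ∈ C.K ℓ → z ∈ C.K ℓ' → False := by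
    intro z hz ha hb
    have hmem : z ∈ C.K ℓ ∩ C.K ℓ' := ⟨ha, hb⟩
    rw [C.hdisj ℓ ℓ' hne] at hmem
    exact hz hmem
  have hipy : C.ip (-y) = - C.ip y := by
    rw [show (-y) = (-1 : ℝ) • y by ext i; simp, C.ip_smul]; ring
  rcases h1 with ha | ha <;> rcases h2 with hb | hb
  · exact key y hy0 (interior_subset ha) (interior_subset hb)
  · have p1 := C.ip_pos (interior_subset ha) (C.interior_ne_zero ha)
    have p2 := C.ip_pos (interior_subset hb) (C.interior_ne_zero hb)
    rw [hipy] at p2; linarith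
  · have p1 := C.ip_pos (interior_subset ha) (C.interior_ne_zero ha)
    have p2 := C.ip_pos (interior_subset hb) (C.interior_ne_zero hb)
    rw [hipy] at p1; linarith
  · exact key (-y) (neg_ne_zero.mpr hy0) (interior_subset ha) (interior_subset hb)

lemma Ctx.T_comp (M N : Matrix (Fin d) (Fin d) ℝ) (x : Fin d → ℝ)
    (h : C.ip (N.mulVec x) ≠ 0) : C.T (M * N) x = C.T M (C.T N x) := by
  have h1 : C.T M (C.T N x) = C.T M (N.mulVec x) := by
    unfold Ctx.T
    rw [show (C.ip (N.mulVec x))⁻¹ • N.mulVec x = C.T N x from rfl]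
    rw [show C.T N x = (C.ip (N.mulVec x))⁻¹ • N.mulVec x from rfl]
    rw [Matrix.mulVec_smul, C.ip_smul, smul_smul]
    congr 1
    rcases eq_or_ne (C.ip (N.mulVec x)) 0 with h0 | h0
    · exact absurd h0 h
    · field_simp
  rw [h1]
  unfold Ctx.T
  rw [← Matrix.mulVec_mulVec]

set_option maxHeartbeats 1000000 in
lemma Ctx.word_facts {v : Fin m → Fin d → ℝ}
    (hv : ∀ j, v j ∈ interior (C.K j) ∧ C.ip (v j) = 1)
    {c₁ : ℝ} (hc₁ : 0 < c₁) (hc₁' : ∀ j, ∀ x ∈ C.K j, c₁ * ‖x‖ ≤ C.ip x)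
    {n : ℕ} (A : Fin n → Matrix (Fin d) (Fin d) ℝ) (hA : ∀ i, A i ∈ C.S) :
    ∃ φ : ℕ → Fin m → Fin m,
      (∀ t, 1 ≤ t → t ≤ n → ∀ j,
        C.Good (((List.ofFn A).take t).reverse.prod) j (φ t j)) ∧
      (∀ t (ht : t < n), 1 ≤ t → ∀ j, C.Good (A ⟨t, ht⟩) (φ t j) (φ (t+1) j)) ∧
      (m*m+1 ≤ n → ∀ j₁ j₂, φ (m*m+1) j₁ = φ (m*m+1) j₂) := by
  haveI : Inhabited (Fin m) := ⟨⟨0, C.hm⟩⟩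
  set L := List.ofFn A with hL
  have hLlen : L.length = n := by rw [hL, List.length_ofFn]
  have hmemS : ∀ t, ∀ M' ∈ (L.take t).reverse, M' ∈ C.S := by
    intro t M' hM'
    rw [List.mem_reverse] at hM'
    have := List.mem_of_mem_take hM'
    rw [hL, List.mem_ofFn] at this
    obtain ⟨i, rfl⟩ := this
    exact hA i
  have hne : ∀ t, 1 ≤ t → t ≤ n → (L.take t).reverse ≠ [] := by
    intro t h1 h2
    have : (L.take t).length = t := by rw [List.length_take, hLlen]; omega
    intro hcon
    rw [← List.length_eq_zero_iff] at *
    rw [List.length_reverse] at hcon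
    omega
  have hGoodP : ∀ t, 1 ≤ t → t ≤ n → ∀ j, ∃ ℓ, C.Good ((L.take t).reverse.prod) j ℓ := by
    intro t h1 h2 j
    exact C.prod_good _ (hne t h1 h2) (hmemS t) j
  classical
  set φ : ℕ → Fin m → Fin m := fun t j =>
    if h : 1 ≤ t ∧ t ≤ n then (hGoodP t h.1 h.2 j).choose else j with hφdef
  have hφ : ∀ t, 1 ≤ t → t ≤ n → ∀ j, C.Good ((L.take t).reverse.prod) j (φ t j) := by
    intro t h1 h2 j
    rw [hφdef]
    simp only [dif_pos (And.intro h1 h2)]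
    exact (hGoodP t h1 h2 j).choose_spec
  -- subword goodness
  have hGoodQ : ∀ t t', 1 ≤ t → t < t' → t' ≤ n → ∀ j,
      C.Good (((L.take t').drop t).reverse.prod) (φ t j) (φ t' j) := by
    intro t t' h1 h2 h3 j
    -- the subword is a nonempty list of members of S
    have hmemS2 : ∀ M' ∈ ((L.take t').drop t).reverse, M' ∈ C.S := by
      intro M' hM'
      rw [List.mem_reverse] at hM'
      have h4 := List.mem_of_mem_drop hM'
      exact hmemS t' M' (by rwa [List.mem_reverse])
    have hne2 : ((L.take t').drop t).reverse ≠ [] := by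
      have h5 : ((L.take t').drop t).length = t' - t := by
        rw [List.length_drop, List.length_take, hLlen]
        omega
      intro hcon
      rw [← List.length_eq_zero_iff] at hcon
      rw [List.length_reverse, h5] at hcon
      omega
    obtain ⟨ℓ, hℓ⟩ := C.prod_good _ hne2 hmemS2 (φ t j)
    -- identify ℓ with φ t' j using a test vector
    obtain ⟨u₀, hu₀, hu₀0⟩ := C.exists_ne_zero j
    have hy := hφ t h1 (by omega) j u₀ hu₀ hu₀0
    set y := ((L.take t).reverse.prod).mulVec u₀ with hy'
    have hy0 : y ≠ 0 := by
      rcases hy with h | h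
      · exact C.interior_ne_zero h
      · exact neg_ne_zero.mp (C.interior_ne_zero h)
    set Q := ((L.take t').drop t).reverse.prod with hQ
    have hz : Q.mulVec y ∈ interior (C.K ℓ) ∨ -(Q.mulVec y) ∈ interior (C.K ℓ) := by
      rcases hy with h | h
      · exact hℓ y (interior_subset h) hy0
      · have := hℓ (-y) (interior_subset h) (neg_ne_zero.mpr hy0)
        rw [Matrix.mulVec_neg] at this
        rcases this with h' | h'
        · right; exact h'
        · left; rwa [neg_neg] at h'
    have hz2 : Q.mulVec y = ((L.take t').reverse.prod).mulVec u₀ := by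
      rw [hy', Matrix.mulVec_mulVec, ← prefix_split L t t' (by omega)]
    have hz3 := hφ t' (by omega) h3 j u₀ hu₀ hu₀0
    rw [← hz2] at hz3
    have hz0 : Q.mulVec y ≠ 0 := by
      rcases hz with h | h
      · exact C.interior_ne_zero h
      · exact neg_ne_zero.mp (C.interior_ne_zero h)
    have := C.target_eq hz0 hz hz3
    rwa [← this]
  refine ⟨φ, hφ, ?_, ?_⟩
  · -- single letter steps
    intro t ht h1 j
    have h2 := hGoodQ t (t+1) h1 (by omega) (by omega) j
    rwa [show (((List.ofFn A).take (t+1)).drop t).reverse.prod = A ⟨t, ht⟩ from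
      mid_singleton A t ht] at h2
  · -- merging
    intro hn j₁ j₂
    by_contra hnecont
    set t₀ := m*m+1 with ht₀
    have hdist : ∀ t, 1 ≤ t → t ≤ t₀ → φ t j₁ ≠ φ t j₂ := by
      intro t h1 h2 heq
      rcases eq_or_lt_of_le h2 with rfl | h3
      · exact hnecont heq
      · have hq1 := hGoodQ t t₀ h1 h3 (by omega) j₁
        have hq2 := hGoodQ t t₀ h1 h3 (by omega) j₂
        rw [heq] at hq1
        exact hnecont (C.good_unique hq1 hq2)
    have hcard : Fintype.card (Fin m × Fin m) < Fintype.card (Fin (m*m+1)) := by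
      simp [Fintype.card_prod]
    obtain ⟨a, b, hab, hfab⟩ := Fintype.exists_ne_map_eq_of_card_lt
      (fun t : Fin (m*m+1) => ((φ (t.1+1) j₁, φ (t.1+1) j₂) : Fin m × Fin m)) hcard
    have hal := a.2
    have hbl := b.2
    have main : ∀ (x y : ℕ), 1 ≤ x → x < y → y ≤ t₀ →
        φ x j₁ = φ y j₁ → φ x j₂ = φ y j₂ → False := by
      intro x y hx hxy hyt hp1 hp2
      have hq1 := hGoodQ x y hx hxy (by omega) j₁
      have hq2 := hGoodQ x y hx hxy (by omega) j₂
      rw [← hp1] at hq1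
      rw [← hp2] at hq2
      exact C.no_two_fixed hv hc₁ hc₁' (hdist x hx (by omega)) hq1 hq2
    rcases lt_or_gt_of_ne (fun h : a.1 = b.1 => hab (Fin.ext h)) with hlt | hlt
    · exact main (a.1+1) (b.1+1) (by omega) (by omega) (by omega)
        (congrArg Prod.fst hfab) (congrArg Prod.snd hfab)
    · exact main (b.1+1) (a.1+1) (by omega) (by omega) (by omega)
        (congrArg Prod.fst hfab).symm (congrArg Prod.snd hfab).symm
variable {d m : ℕ} (C : Ctx d m)

/-- uniform minorization over S, all cones -/
lemma Ctx.minS {v : Fin m → Fin d → ℝ}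
    (hv : ∀ j, v j ∈ interior (C.K j) ∧ C.ip (v j) = 1) :
    ∃ ε : ℝ, 0 < ε ∧ ε ≤ 1/2 ∧ ∀ A ∈ C.S, ∀ (j ℓ' : Fin m), C.Good A j ℓ' →
      ∀ x ∈ C.K j, x ≠ 0 →
        (C.T A x - ε • v ℓ' ∈ C.K ℓ') ∧ (v ℓ' - ε • C.T A x ∈ C.K ℓ') := by
  have key : ∀ j : Fin m, ∃ ε : ℝ, 0 < ε ∧ ε ≤ 1/2 ∧ ∀ A ∈ C.S, ∀ ℓ', C.Good A j ℓ' →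
      ∀ x ∈ C.K j, x ≠ 0 →
        (C.T A x - ε • v ℓ' ∈ C.K ℓ') ∧ (v ℓ' - ε • C.T A x ∈ C.K ℓ') := by
    intro j
    exact C.minorization v hv C.S C.hScpt j (fun A hA => C.hmap A hA j)
  choose εf hεf0 hεf1 hεf using key
  haveI : Nonempty (Fin m) := ⟨⟨0, C.hm⟩⟩
  have hune : (Finset.univ : Finset (Fin m)).Nonempty := Finset.univ_nonempty
  set ε := Finset.univ.inf' hune εf with hε
  have hε0 : 0 < ε := by
    obtain ⟨j, _, hj⟩ := Finset.exists_mem_eq_inf' hune εf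
    rw [hε, hj]; exact hεf0 j
  have hε1 : ε ≤ 1/2 := by
    obtain ⟨j, _, hj⟩ := Finset.exists_mem_eq_inf' hune εf
    rw [hε, hj]; exact hεf1 j
  refine ⟨ε, hε0, hε1, ?_⟩
  intro A hA j ℓ' hgood x hx hx0
  obtain ⟨h1, h2⟩ := hεf j A hA ℓ' hgood x hx hx0
  have hεle : ε ≤ εf j := Finset.inf'_le _ (Finset.mem_univ j)
  have hTK : C.T A x ∈ C.K ℓ' := interior_subset (hgood.T_mem C hx hx0).1
  constructor
  · have heq : C.T A x - ε • v ℓ' = (C.T A x - εf j • v ℓ') + (εf j - ε) • v ℓ' := by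
      ext i; simp; ring
    rw [heq]
    exact C.add_mem h1 (C.hsm ℓ' _ (by linarith) _ (interior_subset (hv ℓ').1))
  · have heq : v ℓ' - ε • C.T A x = (v ℓ' - εf j • C.T A x) + (εf j - ε) • C.T A x := by
      ext i; simp; ring
    rw [heq]
    exact C.add_mem h2 (C.hsm ℓ' _ (by linarith) _ hTK)

set_option maxHeartbeats 2000000 in
/-- Main real contraction lemma -/
lemma Ctx.real_main : ∃ C₀ lam : ℝ, 0 < C₀ ∧ 0 < lam ∧ lam < 1 ∧
    ∀ n : ℕ, 1 ≤ n → ∀ A : Fin n → Matrix (Fin d) (Fin d) ℝ, (∀ i, A i ∈ C.S) →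
      ∀ (x : Fin d → ℝ) (j₁ : Fin m), x ∈ C.K j₁ → x ≠ 0 →
      ∀ (y : Fin d → ℝ) (j₂ : Fin m), y ∈ C.K j₂ → y ≠ 0 →
        ‖C.T ((List.ofFn A).reverse.prod) x - C.T ((List.ofFn A).reverse.prod) y‖
          ≤ C₀ * lam ^ n := by
  obtain ⟨c₁, hc₁, hc₁'⟩ := C.exists_c1
  obtain ⟨v, hv⟩ := C.exists_v
  obtain ⟨ε, hε0, hε1, hmin⟩ := C.minS hv
  set lam := 1 - ε^2 with hlam
  have hlam0 : 0 < lam := by rw [hlam]; nlinarith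
  have hlam1 : lam < 1 := by rw [hlam]; nlinarith
  set h0 := (ε^2)⁻¹ / ε^2 - 1 with hh0
  have hh00 : 0 ≤ h0 := by
    have h8 : (ε^2)⁻¹/ε^2 - 1 = (1 - ε^2*ε^2)/(ε^2*ε^2) := by field_simp
    rw [hh0, h8]
    apply div_nonneg _ (by positivity)
    nlinarith
  set C₀ := (2/c₁) * (h0+1) / lam^(m*m+1+1) with hC₀
  have hC₀0 : 0 < C₀ := by
    rw [hC₀]
    have : (0:ℝ) < h0 + 1 := by linarith
    positivity
  refine ⟨C₀, lam, hC₀0, hlam0, hlam1, ?_⟩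
  intro n hn A hA x j₁ hx hx0 y j₂ hy hy0
  obtain ⟨φ, hφ, hφstep, hφmerge⟩ := C.word_facts hv hc₁ hc₁' A hA
  set L := List.ofFn A with hL
  set P : ℕ → Matrix (Fin d) (Fin d) ℝ := fun t => ((L.take t).reverse.prod) with hP
  have hLlen : L.length = n := by rw [hL, List.length_ofFn]
  have hPn : P n = L.reverse.prod := by
    have h9 : L.take n = L := List.take_of_length_le (le_of_eq hLlen)
    simp only [hP]
    rw [h9]
  -- basic facts about ξ, η
  have hips : ∀ t, 1 ≤ t → t ≤ n → ∀ (z : Fin d → ℝ) (j : Fin m), z ∈ C.K j → z ≠ 0 →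
      C.ip ((P t).mulVec z) ≠ 0 ∧ C.T (P t) z ∈ interior (C.K (φ t j)) ∧
        C.ip (C.T (P t) z) = 1 := by
    intro t h1 h2 z j hz hz0
    have hg := hφ t h1 h2 j
    exact ⟨hg.ip_ne C hz hz0, (hg.T_mem C hz hz0).1, (hg.T_mem C hz hz0).2⟩
  -- recursion
  have hrec : ∀ (t : ℕ) (h1 : 1 ≤ t) (h2 : t < n), ∀ (z : Fin d → ℝ) (j : Fin m),
      z ∈ C.K j → z ≠ 0 →
      C.T (P (t+1)) z = C.T (A ⟨t, h2⟩) (C.T (P t) z) := by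
    intro t h1 h2 z j hz hz0
    have hps : P (t+1) = A ⟨t, h2⟩ * P t := prefix_take_succ A t h2
    rw [hps]
    exact C.T_comp _ _ z (hips t h1 (by omega) z j hz hz0).1
  -- trivial bound
  have htriv : ∀ t, 1 ≤ t → t ≤ n → ‖C.T (P t) x - C.T (P t) y‖ ≤ 2/c₁ := by
    intro t h1 h2
    obtain ⟨_, hxi, hxip⟩ := hips t h1 h2 x j₁ hx hx0
    obtain ⟨_, hyi, hyip⟩ := hips t h1 h2 y j₂ hy hy0
    have b1 : c₁ * ‖C.T (P t) x‖ ≤ 1 := by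
      have := hc₁' (φ t j₁) _ (interior_subset hxi)
      rwa [hxip] at this
    have b2 : c₁ * ‖C.T (P t) y‖ ≤ 1 := by
      have := hc₁' (φ t j₂) _ (interior_subset hyi)
      rwa [hyip] at this
    calc ‖C.T (P t) x - C.T (P t) y‖ ≤ ‖C.T (P t) x‖ + ‖C.T (P t) y‖ := norm_sub_le _ _
    _ ≤ 1/c₁ + 1/c₁ := by
        have hx1 : ‖C.T (P t) x‖ ≤ 1/c₁ := by rw [le_div_iff₀ hc₁]; nlinarith
        have hy1 : ‖C.T (P t) y‖ ≤ 1/c₁ := by rw [le_div_iff₀ hc₁]; nlinarith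
        exact add_le_add hx1 hy1
    _ = 2/c₁ := by ring
  rcases le_or_gt n (m*m+1) with hcase | hcase
  · -- short word : trivial bound suffices
    have h1 := htriv n hn (le_refl n)
    rw [← hPn]
    calc ‖C.T (P n) x - C.T (P n) y‖ ≤ 2/c₁ := h1
    _ ≤ C₀ * lam ^ n := by
        rw [hC₀]
        have hle : lam^(m*m+1) ≤ lam^n := pow_le_pow_of_le_one hlam0.le hlam1.le hcase
        have he1 : (2/c₁) * (h0+1) / lam^((m*m+1)+1) * lam^n ≥ (2/c₁) * (h0+1) / lam^((m*m+1)+1) * lam^(m*m+1) := by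
          apply mul_le_mul_of_nonneg_left hle
          positivity
        have he2 : (2/c₁) * (h0+1) / lam^((m*m+1)+1) * lam^(m*m+1) = (2/c₁) * (h0+1) / lam := by
          rw [pow_succ]
          field_simp
        have he3 : 2/c₁ ≤ (2/c₁) * (h0+1) / lam := by
          rw [le_div_iff₀ hlam0]
          have h9 : (0:ℝ) ≤ 2/c₁ := by positivity
          exact mul_le_mul_of_nonneg_left (by linarith : lam ≤ h0+1) h9
        calc (2:ℝ)/c₁ ≤ (2/c₁) * (h0+1) / lam := he3
        _ = (2/c₁) * (h0+1) / lam^((m*m+1)+1) * lam^(m*m+1) := he2.symm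
        _ ≤ (2/c₁) * (h0+1) / lam^((m*m+1)+1) * lam^n := he1
  · -- long word : contraction
    have hφeq : ∀ t, (m*m+1) ≤ t → t ≤ n → φ t j₁ = φ t j₂ := by
      intro t h1 h2
      induction t with
      | zero => omega
      | succ k ih =>
        rcases Nat.eq_or_lt_of_le h1 with he | hlt
        · rw [← he]
          exact hφmerge (by omega) j₁ j₂
        · have hk : (m*m+1) ≤ k := by omega
          have heqk := ih hk (by omega)
          have hg1 := hφstep k (by omega) (by omega) j₁
          have hg2 := hφstep k (by omega) (by omega) j₂
          rw [heqk] at hg1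
          exact C.good_unique hg1 hg2
    -- inductive contraction claim
    have hclaim : ∀ t, (m*m+1)+1 ≤ t → t ≤ n → ∃ μ M : ℝ, 0 < μ ∧
        (C.T (P t) x - μ • C.T (P t) y ∈ C.K (φ t j₁)) ∧
        (M • C.T (P t) y - C.T (P t) x ∈ C.K (φ t j₁)) ∧
        M / μ - 1 ≤ h0 * lam^(t - (m*m+1) - 1) := by
      intro t h1 h2
      induction t with
      | zero => omega
      | succ k ih =>
        rcases Nat.eq_or_lt_of_le h1 with he | hlt
        · -- base
          have hkt : k = m*m+1 := by omega
          have hg1 := hφstep k (by omega) (by omega) j₁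
          have hgood1 : C.Good (A ⟨k, by omega⟩) (φ k j₁) (φ (k+1) j₁) := hg1
          have hminA := hmin (A ⟨k, by omega⟩) (hA _) (φ k j₁) (φ (k+1) j₁) hgood1
          obtain ⟨_, hxi, hxip⟩ := hips k (by omega) (by omega) x j₁ hx hx0
          obtain ⟨_, hyi, hyip⟩ := hips k (by omega) (by omega) y j₂ hy hy0
          have hyiK : C.T (P k) y ∈ C.K (φ k j₁) := by
            rw [hφeq k (by omega) (by omega)]
            exact interior_subset hyi
          obtain ⟨e1, e2⟩ := C.entry hε0 hgood1 hminA (interior_subset hxi) hyiK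
            (C.ne_zero_of_ip_one hxip) (C.ne_zero_of_ip_one hyip)
          refine ⟨ε^2, (ε^2)⁻¹, by positivity, ?_, ?_, ?_⟩
          · rw [hrec k (by omega) (by omega) x j₁ hx hx0,
              hrec k (by omega) (by omega) y j₂ hy hy0]
            exact e1
          · rw [hrec k (by omega) (by omega) x j₁ hx hx0,
              hrec k (by omega) (by omega) y j₂ hy hy0]
            exact e2
          · have : k + 1 - (m*m+1) - 1 = 0 := by omega
            rw [this, pow_zero, mul_one, hh0]
        · -- step
          have hk1 : (m*m+1)+1 ≤ k := by omega
          obtain ⟨μ, M, hμ, hwl, hwu, hrat⟩ := ih hk1 (by omega)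
          have hg1 := hφstep k (by omega) (by omega) j₁
          have hminA := hmin (A ⟨k, by omega⟩) (hA _) (φ k j₁) (φ (k+1) j₁) hg1
          obtain ⟨_, hxi, hxip⟩ := hips k (by omega) (by omega) x j₁ hx hx0
          obtain ⟨_, hyi, hyip⟩ := hips k (by omega) (by omega) y j₂ hy hy0
          have hyiK : C.T (P k) y ∈ C.K (φ k j₁) := by
            rw [hφeq k (by omega) (by omega)]
            exact interior_subset hyi
          obtain ⟨μ', M', hμ', hwl', hwu', hrat'⟩ := C.step hε0 hε1 hg1 hminA
            (interior_subset hxi) hyiK hxip hyip hμ hwl hwu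
          refine ⟨μ', M', hμ', ?_, ?_, ?_⟩
          · rw [hrec k (by omega) (by omega) x j₁ hx hx0,
              hrec k (by omega) (by omega) y j₂ hy hy0]
            exact hwl'
          · rw [hrec k (by omega) (by omega) x j₁ hx hx0,
              hrec k (by omega) (by omega) y j₂ hy hy0]
            exact hwu'
          · calc M'/μ' - 1 ≤ (1-ε^2) * (M/μ - 1) := hrat'
            _ ≤ (1-ε^2) * (h0 * lam^(k - (m*m+1) - 1)) := by
                apply mul_le_mul_of_nonneg_left hrat (by nlinarith)
            _ = h0 * (lam * lam^(k - (m*m+1) - 1)) := by rw [← hlam]; ring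
            _ = h0 * lam^(k + 1 - (m*m+1) - 1) := by
                rw [← pow_succ']
                congr 2
                omega
    -- conclude
    obtain ⟨μ, M, hμ, hwl, hwu, hrat⟩ := hclaim n (by omega) (le_refl n)
    obtain ⟨_, hxi, hxip⟩ := hips n hn (le_refl n) x j₁ hx hx0
    obtain ⟨_, hyi, hyip⟩ := hips n hn (le_refl n) y j₂ hy hy0
    have hyiK : C.T (P n) y ∈ C.K (φ n j₁) := by
      rw [hφeq n (by omega) (le_refl n)]
      exact interior_subset hyi
    have hd := C.witness_dist hc₁ hc₁' (interior_subset hxi) hyiK hxip hyip hμ hwl hwu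
    have hfinal : ‖C.T (P n) x - C.T (P n) y‖ ≤ 2/c₁ * (h0 * lam^(n - (m*m+1) - 1)) := by
      calc ‖C.T (P n) x - C.T (P n) y‖ ≤ 2/c₁ * (M/μ - 1) := hd
      _ ≤ 2/c₁ * (h0 * lam^(n - (m*m+1) - 1)) := mul_le_mul_of_nonneg_left hrat (by positivity)
    rw [← hPn]
    calc ‖C.T (P n) x - C.T (P n) y‖ ≤ 2/c₁ * (h0 * lam^(n - (m*m+1) - 1)) := hfinal
    _ ≤ C₀ * lam ^ n := by
        have hsplit : lam^n = lam^(n - (m*m+1) - 1) * lam^((m*m+1)+1) := by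
          rw [← pow_add]
          congr 1
          omega
        have hlamne : lam ≠ 0 := ne_of_gt hlam0
        have hcne : c₁ ≠ 0 := ne_of_gt hc₁
        have hkey : C₀ * lam^n = (2/c₁*(h0+1)) * lam^(n-(m*m+1)-1) := by
          rw [hC₀, hsplit]
          field_simp
        rw [hkey]
        have h11 : 2/c₁ * (h0 * lam^(n-(m*m+1)-1)) = (2/c₁*h0) * lam^(n-(m*m+1)-1) := by ring
        rw [h11]
        apply mul_le_mul_of_nonneg_right _ (by positivity)
        have h9 : (0:ℝ) ≤ 2/c₁ := by positivity
        have h10 : 2/c₁*(h0+1) - 2/c₁*h0 = 2/c₁ := by ring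
        linarith
variable {d m : ℕ} (C : Ctx d m)

lemma mulVecC_formula (B : Matrix (Fin d) (Fin d) ℝ) (c : ℂ) (u v : Fin d → ℝ) :
    mulVecC B (fun i => c * ((↑(u i) + ↑(v i)) + Complex.I * (↑(u i) - ↑(v i))))
    = fun i => c * ((↑(B.mulVec u i) + ↑(B.mulVec v i)) +
        Complex.I * (↑(B.mulVec u i) - ↑(B.mulVec v i))) := by
  funext i
  simp only [mulVecC, Matrix.mulVec, Matrix.map_apply, dotProduct]
  have hterm : ∀ k : Fin d, (↑(B i k) : ℂ) * (c * ((↑(u k) + ↑(v k)) +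
      Complex.I * (↑(u k) - ↑(v k)))) =
      c*(1+Complex.I) * ((↑(B i k) : ℂ) * ↑(u k)) + c*(1-Complex.I) * ((↑(B i k):ℂ) * ↑(v k)) := by
    intro k; ring
  rw [Finset.sum_congr rfl (fun k _ => hterm k), Finset.sum_add_distrib,
    ← Finset.mul_sum, ← Finset.mul_sum]
  have h1 : (∑ k, (↑(B i k) : ℂ) * ↑(u k)) = ((∑ k, B i k * u k : ℝ) : ℂ) := by push_cast; rfl
  have h2 : (∑ k, (↑(B i k) : ℂ) * ↑(v k)) = ((∑ k, B i k * v k : ℝ) : ℂ) := by push_cast; rfl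
  rw [h1, h2]
  ring

lemma Ctx.cip_formula (c : ℂ) (u v : Fin d → ℝ) :
    (∑ i, (c * ((↑(u i) + ↑(v i)) + Complex.I * (↑(u i) - ↑(v i)))) * (↑(C.w i) : ℂ))
    = c * (((C.ip u : ℝ) + (C.ip v : ℝ)) + Complex.I * ((C.ip u : ℝ) - (C.ip v : ℝ))) := by
  have hterm : ∀ i : Fin d, (c * ((↑(u i) + ↑(v i)) + Complex.I * (↑(u i) - ↑(v i)))) * ↑(C.w i) =
      c*(1+Complex.I) * ((↑(u i) : ℂ) * ↑(C.w i)) + c*(1-Complex.I) * ((↑(v i):ℂ) * ↑(C.w i)) := by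
    intro i; ring
  rw [Finset.sum_congr rfl (fun i _ => hterm i), Finset.sum_add_distrib,
    ← Finset.mul_sum, ← Finset.mul_sum]
  have h1 : (∑ i, (↑(u i) : ℂ) * ↑(C.w i)) = ((C.ip u : ℝ) : ℂ) := by
    rw [Ctx.ip_def]; push_cast; rfl
  have h2 : (∑ i, (↑(v i) : ℂ) * ↑(C.w i)) = ((C.ip v : ℝ) : ℂ) := by
    rw [Ctx.ip_def]; push_cast; rfl
  rw [h1, h2]
  ring

lemma complex_combo (α β ph qh P Q t σ : ℝ) (hP : P = α * ph) (hQ : Q = β * qh)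
    (hden : α^2 + β^2 ≠ 0) (ht : t = α^2/(α^2+β^2)) (hσ : σ = α*β/(α^2+β^2)) :
    ((P : ℂ) + (Q : ℂ)) + Complex.I * ((P : ℂ) - (Q : ℂ)) =
      (((α : ℂ) + (β : ℂ)) + Complex.I * ((α : ℂ) - (β : ℂ))) *
        ((↑(t * ph + (1-t) * qh) : ℂ) + Complex.I * (↑(σ * (ph - qh)) : ℂ)) := by
  have e1 : P + Q = (α+β) * (t * ph + (1-t) * qh) - (α-β) * (σ * (ph - qh)) := by
    subst hP hQ ht hσ; field_simp; ring
  have e2 : P - Q = (α-β) * (t * ph + (1-t) * qh) + (α+β) * (σ * (ph - qh)) := by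
    subst hP hQ ht hσ; field_simp; ring
  apply Complex.ext
  · simp only [Complex.add_re, Complex.sub_re, Complex.mul_re, Complex.I_re, Complex.I_im,
      Complex.ofReal_re, Complex.ofReal_im, Complex.add_im, Complex.sub_im, Complex.mul_im]
    ring_nf
    linear_combination e1
  · simp only [Complex.add_re, Complex.sub_re, Complex.mul_re, Complex.I_re, Complex.I_im,
      Complex.ofReal_re, Complex.ofReal_im, Complex.add_im, Complex.sub_im, Complex.mul_im]
    ring_nf
    linear_combination e2

lemma cast_pair_ne_zero {x y : ℝ} (h : ¬(x = 0 ∧ y = 0)) :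
    ((x : ℂ) + Complex.I * (y : ℂ)) ≠ 0 := by
  intro hc
  apply h
  constructor
  · have := congrArg Complex.re hc
    simpa using this
  · have := congrArg Complex.im hc
    simpa using this

set_option maxHeartbeats 1000000 in
/-- Representation of the normalized complexified image. -/
lemma Ctx.complex_rep {B : Matrix (Fin d) (Fin d) ℝ} {j ℓ : Fin m} (hg : C.Good B j ℓ)
    {z : Fin d → ℂ} (hz : z ∈ complexify (C.K j)) (hz0 : z ≠ 0) :
    ∃ (u₀ v₀ : Fin d → ℝ) (t σ : ℝ), u₀ ∈ C.K j ∧ v₀ ∈ C.K j ∧ u₀ ≠ 0 ∧ v₀ ≠ 0 ∧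
      0 ≤ t ∧ t ≤ 1 ∧ |σ| ≤ 1 ∧
      (∑ i, mulVecC B z i * (C.w i : ℂ)) ≠ 0 ∧
      (∑ i, mulVecC B z i * (C.w i : ℂ))⁻¹ • mulVecC B z
        = fun i => (↑(t * (C.T B u₀) i + (1-t) * (C.T B v₀) i) : ℂ) +
            Complex.I * (↑(σ * ((C.T B u₀) i - (C.T B v₀) i)) : ℂ) := by
  obtain ⟨c, u, v, hu, hv, hzeq⟩ := hz
  have hc0 : c ≠ 0 := by
    intro hc
    apply hz0
    rw [hzeq, hc]
    funext i; simp
  have huv : ¬(u = 0 ∧ v = 0) := by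
    rintro ⟨rfl, rfl⟩
    apply hz0
    rw [hzeq]
    funext i; simp
  set p := B.mulVec u with hp
  set q := B.mulVec v with hq
  set α := C.ip p with hα
  set β := C.ip q with hβ
  have hαβ : ¬(α = 0 ∧ β = 0) := by
    rintro ⟨hα0, hβ0⟩
    rcases not_and_or.mp huv with hune | hvne
    · exact (hg.ip_ne C hu hune) hα0
    · exact (hg.ip_ne C hv hvne) hβ0
  have hden : α^2 + β^2 ≠ 0 := by
    intro hc
    apply hαβ
    constructor <;> nlinarith [sq_nonneg α, sq_nonneg β]
  have hden' : 0 < α^2 + β^2 := by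
    rcases lt_or_eq_of_le (by positivity : (0:ℝ) ≤ α^2 + β^2) with h | h
    · exact h
    · exact absurd h.symm hden
  classical
  set u₀ := if u = 0 then v else u with hu₀
  set v₀ := if v = 0 then u else v with hv₀
  have hu₀K : u₀ ∈ C.K j := by rw [hu₀]; split <;> assumption
  have hv₀K : v₀ ∈ C.K j := by rw [hv₀]; split <;> assumption
  have hu₀0 : u₀ ≠ 0 := by
    rw [hu₀]; split
    · rcases not_and_or.mp huv with h | h
      · exact absurd (by assumption) h
      · exact h
    · assumption
  have hv₀0 : v₀ ≠ 0 := by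
    rw [hv₀]; split
    · rcases not_and_or.mp huv with h | h
      · exact h
      · exact absurd (by assumption) h
    · assumption
  have hPrel : ∀ i, p i = α * (C.T B u₀) i := by
    intro i
    rw [hu₀]
    by_cases hcase : u = 0
    · rw [if_pos hcase]
      have hp0 : p = 0 := by rw [hp, hcase, Matrix.mulVec_zero]
      have hα0 : α = 0 := by rw [hα, hp0]; simp [Ctx.ip]
      rw [show p i = 0 from by rw [hp0]; rfl, hα0, zero_mul]
    · rw [if_neg hcase]
      have hαne : α ≠ 0 := hg.ip_ne C hu hcase
      unfold Ctx.T
      rw [← hp, ← hα]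
      simp only [Pi.smul_apply, smul_eq_mul]
      field_simp
  have hQrel : ∀ i, q i = β * (C.T B v₀) i := by
    intro i
    rw [hv₀]
    by_cases hcase : v = 0
    · rw [if_pos hcase]
      have hq0 : q = 0 := by rw [hq, hcase, Matrix.mulVec_zero]
      have hβ0 : β = 0 := by rw [hβ, hq0]; simp [Ctx.ip]
      rw [show q i = 0 from by rw [hq0]; rfl, hβ0, zero_mul]
    · rw [if_neg hcase]
      have hβne : β ≠ 0 := hg.ip_ne C hv hcase
      unfold Ctx.T
      rw [← hq, ← hβ]
      simp only [Pi.smul_apply, smul_eq_mul]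
      field_simp
  set t := α^2/(α^2+β^2) with htdef
  set σ := α*β/(α^2+β^2) with hσdef
  have ht0 : 0 ≤ t := by rw [htdef]; positivity
  have ht1 : t ≤ 1 := by
    rw [htdef, div_le_one hden']
    nlinarith [sq_nonneg β]
  have hσ1 : |σ| ≤ 1 := by
    rw [abs_le]
    constructor
    · rw [hσdef, le_div_iff₀ hden']
      nlinarith [sq_nonneg (α+β)]
    · rw [hσdef, div_le_one hden']
      nlinarith [sq_nonneg (α-β)]
  -- the denominator value
  have hmv : mulVecC B z = fun i => c * ((↑(p i) + ↑(q i)) +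
      Complex.I * (↑(p i) - ↑(q i))) := by
    rw [hzeq]
    exact mulVecC_formula B c u v
  set D := (((α:ℂ) + (β:ℂ)) + Complex.I * ((α:ℂ) - (β:ℂ))) with hD
  have hcip : (∑ i, mulVecC B z i * (C.w i : ℂ)) = c * D := by
    rw [hmv]
    have := C.cip_formula c u v
    rw [hzeq] at *
    calc (∑ i, (fun i => c * ((↑(p i) + ↑(q i)) + Complex.I * (↑(p i) - ↑(q i)))) i * (C.w i : ℂ))
        = (∑ i, (c * ((↑(p i) + ↑(q i)) + Complex.I * (↑(p i) - ↑(q i)))) * (C.w i : ℂ)) := rfl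
    _ = c * (((C.ip p : ℝ) + (C.ip q : ℝ)) + Complex.I * ((C.ip p : ℝ) - (C.ip q : ℝ))) :=
        C.cip_formula c p q
    _ = c * D := by rw [hD, ← hα, ← hβ]
  have hDne : D ≠ 0 := by
    rw [hD]
    have h9 : ¬((α + β) = 0 ∧ (α - β) = 0) := by
      rintro ⟨h1, h2⟩
      exact hαβ ⟨by linarith, by linarith⟩
    have := cast_pair_ne_zero h9
    push_cast at this
    convert this using 2 <;> push_cast <;> ring
  refine ⟨u₀, v₀, t, σ, hu₀K, hv₀K, hu₀0, hv₀0, ht0, ht1, hσ1, ?_, ?_⟩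
  · rw [hcip]
    exact mul_ne_zero hc0 hDne
  · funext i
    rw [hcip]
    simp only [Pi.smul_apply, smul_eq_mul]
    rw [hmv]
    have hkey := complex_combo α β ((C.T B u₀) i) ((C.T B v₀) i) (p i) (q i) t σ
      (hPrel i) (hQrel i) hden htdef hσdef
    rw [← hD] at hkey
    calc (c * D)⁻¹ * ((fun i => c * ((↑(p i) + ↑(q i)) + Complex.I * (↑(p i) - ↑(q i)))) i)
        = (c * D)⁻¹ * (c * ((↑(p i) + ↑(q i)) + Complex.I * (↑(p i) - ↑(q i)))) := rfl
    _ = (c * D)⁻¹ * (c * (D * ((↑(t * (C.T B u₀) i + (1-t) * (C.T B v₀) i) : ℂ) +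
          Complex.I * (↑(σ * ((C.T B u₀) i - (C.T B v₀) i)) : ℂ)))) := by rw [hkey]
    _ = (↑(t * (C.T B u₀) i + (1-t) * (C.T B v₀) i) : ℂ) +
          Complex.I * (↑(σ * ((C.T B u₀) i - (C.T B v₀) i)) : ℂ) := by
        rw [mul_inv]
        have hD0 : D ≠ 0 := hDne
        field_simp
end S7

set_option maxHeartbeats 2000000 in
/-- Proposition 3.12 / Theorem 3.1(v): exponential contraction of the projectivised action
of products of matrices from a compact set with a multicone on the complexified cones. -/
theorem stmt7 {d m : ℕ} (hd : 1 ≤ d) (hm : 0 < m)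
    (S : Set (Matrix (Fin d) (Fin d) ℝ)) (hSne : S.Nonempty) (hScpt : IsCompact S)
    (K : Fin m → Set (Fin d → ℝ)) (w : Fin d → ℝ) (hK : IsMulticone S K w) :
    ∃ C γ : ℝ, 0 < C ∧ 0 < γ ∧
      ∀ n : ℕ, 1 ≤ n → ∀ A : Fin n → Matrix (Fin d) (Fin d) ℝ, (∀ i, A i ∈ S) →
        ∀ z₁ ∈ ⋃ j, complexify (K j), ∀ z₂ ∈ ⋃ j, complexify (K j),
          z₁ ≠ 0 → z₂ ≠ 0 →
          (∑ i, mulVecC ((List.ofFn A).reverse.prod) z₁ i * (w i : ℂ)) ≠ 0 ∧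
          (∑ i, mulVecC ((List.ofFn A).reverse.prod) z₂ i * (w i : ℂ)) ≠ 0 ∧
          _root_.enorm (((∑ i, mulVecC ((List.ofFn A).reverse.prod) z₁ i * (w i : ℂ))⁻¹ •
                mulVecC ((List.ofFn A).reverse.prod) z₁)
              - ((∑ i, mulVecC ((List.ofFn A).reverse.prod) z₂ i * (w i : ℂ))⁻¹ •
                mulVecC ((List.ofFn A).reverse.prod) z₂))
            ≤ C * Real.exp (-γ * n) := by
  obtain ⟨hcl, hcv, hint, hsm, hw1, hpos, hmap, hdisj⟩ := hK
  set Ct : S7.Ctx d m :=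
    ⟨S, K, w, hd, hm, hSne, hScpt, hcl, hcv, hint, hsm, hw1, hpos, hmap, hdisj⟩ with hCt
  obtain ⟨C₀, lam, hC₀0, hlam0, hlam1, hmain⟩ := Ct.real_main
  have hd0 : (0:ℝ) < Real.sqrt d := Real.sqrt_pos.2 (by exact_mod_cast hd)
  refine ⟨4 * Real.sqrt d * C₀, - Real.log lam, by positivity,
    by have := Real.log_neg hlam0 hlam1; linarith, ?_⟩
  intro n hn A hA z₁ hz₁ z₂ hz₂ hz₁0 hz₂0
  rw [Set.mem_iUnion] at hz₁ hz₂
  obtain ⟨j₁, hzj₁⟩ := hz₁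
  obtain ⟨j₂, hzj₂⟩ := hz₂
  set B := (List.ofFn A).reverse.prod with hB
  have hlistne : (List.ofFn A).reverse ≠ [] := by
    intro h
    have := congrArg List.length h
    rw [List.length_reverse, List.length_ofFn] at this
    simp at this
    omega
  have hlistS : ∀ M ∈ (List.ofFn A).reverse, M ∈ Ct.S := by
    intro M hM
    rw [List.mem_reverse, List.mem_ofFn] at hM
    obtain ⟨i, rfl⟩ := hM
    exact hA i
  obtain ⟨ℓ₁, hg₁⟩ := Ct.prod_good _ hlistne hlistS j₁
  obtain ⟨ℓ₂, hg₂⟩ := Ct.prod_good _ hlistne hlistS j₂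
  obtain ⟨u₁, v₁, t₁, σ₁, hu₁K, hv₁K, hu₁0, hv₁0, ht₁0, ht₁1, hσ₁, hne₁, heq₁⟩ :=
    Ct.complex_rep hg₁ hzj₁ hz₁0
  obtain ⟨u₂, v₂, t₂, σ₂, hu₂K, hv₂K, hu₂0, hv₂0, ht₂0, ht₂1, hσ₂, hne₂, heq₂⟩ :=
    Ct.complex_rep hg₂ hzj₂ hz₂0
  refine ⟨hne₁, hne₂, ?_⟩
  set δ := C₀ * lam ^ n with hδ
  have hδ0 : 0 < δ := by positivity
  -- pairwise bounds
  have hb_pp : ‖Ct.T B u₁ - Ct.T B u₂‖ ≤ δ := hmain n hn A hA u₁ j₁ hu₁K hu₁0 u₂ j₂ hu₂K hu₂0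
  have hb_qq : ‖Ct.T B v₁ - Ct.T B v₂‖ ≤ δ := hmain n hn A hA v₁ j₁ hv₁K hv₁0 v₂ j₂ hv₂K hv₂0
  have hb_pq1 : ‖Ct.T B u₁ - Ct.T B v₁‖ ≤ δ := hmain n hn A hA u₁ j₁ hu₁K hu₁0 v₁ j₁ hv₁K hv₁0
  have hb_pq2 : ‖Ct.T B u₂ - Ct.T B v₂‖ ≤ δ := hmain n hn A hA u₂ j₂ hu₂K hu₂0 v₂ j₂ hv₂K hv₂0
  -- entrywise bounds
  have hentry : ∀ i : Fin d,
      ‖(((∑ i, mulVecC B z₁ i * (w i : ℂ))⁻¹ • mulVecC B z₁)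
        - ((∑ i, mulVecC B z₂ i * (w i : ℂ))⁻¹ • mulVecC B z₂)) i‖ ≤ 4 * δ := by
    intro i
    have hv1 : (((∑ i, mulVecC B z₁ i * (w i : ℂ))⁻¹ • mulVecC B z₁)
        - ((∑ i, mulVecC B z₂ i * (w i : ℂ))⁻¹ • mulVecC B z₂)) i
        = ((↑(t₁ * (Ct.T B u₁) i + (1-t₁) * (Ct.T B v₁) i) : ℂ) +
            Complex.I * (↑(σ₁ * ((Ct.T B u₁) i - (Ct.T B v₁) i)) : ℂ))
          - ((↑(t₂ * (Ct.T B u₂) i + (1-t₂) * (Ct.T B v₂) i) : ℂ) +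
            Complex.I * (↑(σ₂ * ((Ct.T B u₂) i - (Ct.T B v₂) i)) : ℂ)) := by
      rw [Pi.sub_apply, heq₁, heq₂]
    rw [hv1]
    set R1 := t₁ * (Ct.T B u₁) i + (1-t₁) * (Ct.T B v₁) i
    set R2 := t₂ * (Ct.T B u₂) i + (1-t₂) * (Ct.T B v₂) i
    set S1 := σ₁ * ((Ct.T B u₁) i - (Ct.T B v₁) i)
    set S2 := σ₂ * ((Ct.T B u₂) i - (Ct.T B v₂) i)
    have hsplit : ((R1 : ℂ) + Complex.I * (S1 : ℂ)) - ((R2 : ℂ) + Complex.I * (S2 : ℂ))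
        = ((R1 - R2 : ℝ) : ℂ) + Complex.I * ((S1 - S2 : ℝ) : ℂ) := by push_cast; ring
    rw [hsplit]
    have hnorm1 : ‖((R1 - R2 : ℝ) : ℂ) + Complex.I * ((S1 - S2 : ℝ) : ℂ)‖
        ≤ |R1 - R2| + |S1 - S2| := by
      calc ‖((R1 - R2 : ℝ) : ℂ) + Complex.I * ((S1 - S2 : ℝ) : ℂ)‖
          ≤ ‖((R1 - R2 : ℝ) : ℂ)‖ + ‖Complex.I * ((S1 - S2 : ℝ) : ℂ)‖ := norm_add_le _ _
      _ = |R1 - R2| + |S1 - S2| := by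
          rw [norm_mul, Complex.norm_I, one_mul, Complex.norm_real, Complex.norm_real]
          rfl
    -- coordinate distances
    have hcp : |(Ct.T B u₁) i - (Ct.T B u₂) i| ≤ δ := by
      have := norm_le_pi_norm (Ct.T B u₁ - Ct.T B u₂) i
      rw [Pi.sub_apply] at this
      calc |(Ct.T B u₁) i - (Ct.T B u₂) i| = ‖(Ct.T B u₁) i - (Ct.T B u₂) i‖ := rfl
      _ ≤ ‖Ct.T B u₁ - Ct.T B u₂‖ := this
      _ ≤ δ := hb_pp
    have hcq : |(Ct.T B v₁) i - (Ct.T B v₂) i| ≤ δ := by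
      have := norm_le_pi_norm (Ct.T B v₁ - Ct.T B v₂) i
      rw [Pi.sub_apply] at this
      calc |(Ct.T B v₁) i - (Ct.T B v₂) i| = ‖(Ct.T B v₁) i - (Ct.T B v₂) i‖ := rfl
      _ ≤ ‖Ct.T B v₁ - Ct.T B v₂‖ := this
      _ ≤ δ := hb_qq
    have hc1 : |(Ct.T B u₁) i - (Ct.T B v₁) i| ≤ δ := by
      have := norm_le_pi_norm (Ct.T B u₁ - Ct.T B v₁) i
      rw [Pi.sub_apply] at this
      calc |(Ct.T B u₁) i - (Ct.T B v₁) i| = ‖(Ct.T B u₁) i - (Ct.T B v₁) i‖ := rfl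
      _ ≤ ‖Ct.T B u₁ - Ct.T B v₁‖ := this
      _ ≤ δ := hb_pq1
    have hc2 : |(Ct.T B u₂) i - (Ct.T B v₂) i| ≤ δ := by
      have := norm_le_pi_norm (Ct.T B u₂ - Ct.T B v₂) i
      rw [Pi.sub_apply] at this
      calc |(Ct.T B u₂) i - (Ct.T B v₂) i| = ‖(Ct.T B u₂) i - (Ct.T B v₂) i‖ := rfl
      _ ≤ ‖Ct.T B u₂ - Ct.T B v₂‖ := this
      _ ≤ δ := hb_pq2
    have hR : |R1 - R2| ≤ 2 * δ := by
      have hrw : R1 - R2 = t₁ * ((Ct.T B u₁) i - (Ct.T B u₂) i)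
          + (1 - t₁) * ((Ct.T B v₁) i - (Ct.T B v₂) i)
          + (t₁ - t₂) * ((Ct.T B u₂) i - (Ct.T B v₂) i) := by
        simp only [R1, R2]; ring
      rw [hrw]
      have h1 := abs_add_le (t₁ * ((Ct.T B u₁) i - (Ct.T B u₂) i)
          + (1 - t₁) * ((Ct.T B v₁) i - (Ct.T B v₂) i))
        ((t₁ - t₂) * ((Ct.T B u₂) i - (Ct.T B v₂) i))
      have h2 := abs_add_le (t₁ * ((Ct.T B u₁) i - (Ct.T B u₂) i))
        ((1 - t₁) * ((Ct.T B v₁) i - (Ct.T B v₂) i))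
      have e1 : |t₁ * ((Ct.T B u₁) i - (Ct.T B u₂) i)| ≤ t₁ * δ := by
        rw [abs_mul, abs_of_nonneg ht₁0]
        exact mul_le_mul_of_nonneg_left hcp ht₁0
      have e2 : |(1 - t₁) * ((Ct.T B v₁) i - (Ct.T B v₂) i)| ≤ (1 - t₁) * δ := by
        rw [abs_mul, abs_of_nonneg (by linarith)]
        exact mul_le_mul_of_nonneg_left hcq (by linarith)
      have e3 : |(t₁ - t₂) * ((Ct.T B u₂) i - (Ct.T B v₂) i)| ≤ 1 * δ := by
        rw [abs_mul]
        apply mul_le_mul (by rw [abs_le]; constructor <;> linarith) hc2 (abs_nonneg _)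
          (by norm_num)
      calc |_| ≤ _ := h1
      _ ≤ (t₁ * δ + (1 - t₁) * δ) + 1 * δ := by
          apply add_le_add _ e3
          exact le_trans h2 (add_le_add e1 e2)
      _ = 2 * δ := by ring
    have hS : |S1 - S2| ≤ 2 * δ := by
      have h1 := abs_sub (S1) (S2)
      have e1 : |S1| ≤ 1 * δ := by
        simp only [S1]
        rw [abs_mul]
        exact mul_le_mul hσ₁ hc1 (abs_nonneg _) (by norm_num)
      have e2 : |S2| ≤ 1 * δ := by
        simp only [S2]
        rw [abs_mul]
        exact mul_le_mul hσ₂ hc2 (abs_nonneg _) (by norm_num)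
      calc |S1 - S2| ≤ |S1| + |S2| := abs_sub _ _
      _ ≤ 1 * δ + 1 * δ := add_le_add e1 e2
      _ = 2 * δ := by ring
    calc ‖((R1 - R2 : ℝ) : ℂ) + Complex.I * ((S1 - S2 : ℝ) : ℂ)‖
        ≤ |R1 - R2| + |S1 - S2| := hnorm1
    _ ≤ 2 * δ + 2 * δ := add_le_add hR hS
    _ = 4 * δ := by ring
  -- assemble the enorm bound
  have henorm : _root_.enorm (((∑ i, mulVecC B z₁ i * (w i : ℂ))⁻¹ • mulVecC B z₁)
      - ((∑ i, mulVecC B z₂ i * (w i : ℂ))⁻¹ • mulVecC B z₂)) ≤ Real.sqrt d * (4 * δ) := by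
    unfold _root_.enorm
    have hsum : (∑ i, ‖(((∑ i, mulVecC B z₁ i * (w i : ℂ))⁻¹ • mulVecC B z₁)
        - ((∑ i, mulVecC B z₂ i * (w i : ℂ))⁻¹ • mulVecC B z₂)) i‖ ^ 2)
        ≤ ∑ _i : Fin d, (4*δ)^2 := by
      apply Finset.sum_le_sum
      intro i _
      have := hentry i
      have hnn : (0:ℝ) ≤ ‖(((∑ i, mulVecC B z₁ i * (w i : ℂ))⁻¹ • mulVecC B z₁)
          - ((∑ i, mulVecC B z₂ i * (w i : ℂ))⁻¹ • mulVecC B z₂)) i‖ := norm_nonneg _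
      nlinarith
    calc Real.sqrt (∑ i, ‖(((∑ i, mulVecC B z₁ i * (w i : ℂ))⁻¹ • mulVecC B z₁)
        - ((∑ i, mulVecC B z₂ i * (w i : ℂ))⁻¹ • mulVecC B z₂)) i‖ ^ 2)
        ≤ Real.sqrt (∑ _i : Fin d, (4*δ)^2) := Real.sqrt_le_sqrt hsum
    _ = Real.sqrt (d * (4*δ)^2) := by
        rw [Finset.sum_const, Finset.card_univ, Fintype.card_fin]
        congr 1
        simp [nsmul_eq_mul]
    _ = Real.sqrt d * (4*δ) := by
        rw [Real.sqrt_mul (by positivity) ((4*δ)^2), Real.sqrt_sq (by positivity)]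
  -- convert exponential
  have hexp : Real.exp (-(- Real.log lam) * n) = lam ^ n := by
    rw [neg_neg, mul_comm, Real.exp_nat_mul, Real.exp_log hlam0]
  calc _root_.enorm _ ≤ Real.sqrt d * (4 * δ) := henorm
  _ = 4 * Real.sqrt d * C₀ * lam ^ n := by rw [hδ]; ring
  _ = 4 * Real.sqrt d * C₀ * Real.exp (-(- Real.log lam) * n) := by rw [hexp]
end
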